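/- arXiv:1112.3730 — 3 statements merged into one kernel-verified Lean document; each statement's English description precedes it below -/
import Mathlib

section
/- CN-side derivative identity: For a multi-edge type D-GLDPC ensemble in which every check-node local code has minimum distance at least 2, for all l,m ∈ E, the partial derivative of the aggregate check-node EXIT function I_{EC,l}(·) with respect to its m-th argument, evaluated at the all-ones point I = (1,…,1), equals C^{l,m} = Σ_{δ∈F_{C2}} (ρ_{δ,l}/s_{δ,l}) ξ_2^{(δ)}(l,m). -/
open scoped Classical

noncomputable section

namespace MET

/-- Hamming weight of a binary vector. -/
def hWeight {m : ℕ} (x : Fin m → ZMod 2) : ℕ :=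
  (Finset.univ.filter fun i => x i ≠ 0).card

/-- The row space of `G` (the local code) has minimum Hamming weight at least 2. -/
def HasMinDistGE2 {k q : ℕ} (G : Matrix (Fin k) (Fin q) (ZMod 2)) : Prop :=
  ∀ x : Fin k → ZMod 2, Matrix.vecMul x G ≠ 0 → 2 ≤ hWeight (Matrix.vecMul x G)

/-- The row space of `G` has minimum Hamming weight exactly 2. -/
def HasMinDistEq2 {k q : ℕ} (G : Matrix (Fin k) (Fin q) (ZMod 2)) : Prop :=
  HasMinDistGE2 G ∧ ∃ x : Fin k → ZMod 2, hWeight (Matrix.vecMul x G) = 2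

/-- The weight-2 vector supported on `{i,j}`. -/
def wt2vec {q : ℕ} (i j : Fin q) : Fin q → ZMod 2 :=
  fun r => if r = i ∨ r = j then 1 else 0

/-- Number of columns of edge type `l`. -/
def colCount {q n : ℕ} (τ : Fin q → Fin n) (l : Fin n) : ℕ :=
  (Finset.univ.filter fun j => τ j = l).card

/-- Rank of the matrix formed by the columns of `G` indexed by `A` together with the columns
of the `k × k` identity matrix indexed by `T`. -/
def colRank {k q : ℕ} (G : Matrix (Fin k) (Fin q) (ZMod 2))
    (A : Finset (Fin q)) (T : Finset (Fin k)) : ℕ :=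
  Matrix.rank (Matrix.of fun (i : Fin k) (j : {x // x ∈ A} ⊕ {x // x ∈ T}) =>
    Sum.elim (fun a => G i a.1) (fun t => if i = t.1 then (1 : ZMod 2) else 0) j)

/-- Multi-type split information function `ẽ_{g;u}` of a VN generator matrix. -/
def eTilde {n k q : ℕ} (G : Matrix (Fin k) (Fin q) (ZMod 2)) (τ : Fin q → Fin n)
    (g : Fin n → ℕ) (u : ℕ) : ℕ :=
  ∑ A ∈ Finset.univ.filter (fun A : Finset (Fin q) =>
      ∀ l, (A.filter fun j => τ j = l).card = g l),
    ∑ T ∈ Finset.univ.filter (fun T : Finset (Fin k) => T.card = u),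
      colRank G A T

/-- Multi-type information function `ẽ_g` of a CN generator matrix. -/
def eTildeC {n h s : ℕ} (G : Matrix (Fin h) (Fin s) (ZMod 2)) (τ : Fin s → Fin n)
    (g : Fin n → ℕ) : ℕ :=
  ∑ A ∈ Finset.univ.filter (fun A : Finset (Fin s) =>
      ∀ l, (A.filter fun j => τ j = l).card = g l),
    colRank G A ∅

/-- `χ_{2,u}(l,m)`: ordered pairs of distinct columns of types `l,m` supporting a weight-2
codeword generated by a weight-`u` input word. -/
def chi2 {n k q : ℕ} (G : Matrix (Fin k) (Fin q) (ZMod 2)) (τ : Fin q → Fin n)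
    (u : ℕ) (l m : Fin n) : ℕ :=
  (Finset.univ.filter fun p : Fin q × Fin q =>
    p.1 ≠ p.2 ∧ τ p.1 = l ∧ τ p.2 = m ∧
      ∃ x : Fin k → ZMod 2, hWeight x = u ∧ Matrix.vecMul x G = wt2vec p.1 p.2).card

/-- `ξ_2(l,m)`: ordered pairs of distinct coordinates of types `l,m` supporting a weight-2
codeword of the row space. -/
def xi2 {n h s : ℕ} (G : Matrix (Fin h) (Fin s) (ZMod 2)) (τ : Fin s → Fin n)
    (l m : Fin n) : ℕ :=
  (Finset.univ.filter fun p : Fin s × Fin s =>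
    p.1 ≠ p.2 ∧ τ p.1 = l ∧ τ p.2 = m ∧
      ∃ x : Fin h → ZMod 2, Matrix.vecMul x G = wt2vec p.1 p.2).card

/-- Range of the tuple `t`: `0 ≤ t l ≤ q l` for `l ≠ e` and `0 ≤ t e ≤ q e - 1`. -/
def tRange {n : ℕ} (q : Fin n → ℕ) (e : Fin n) : Finset (Fin n → ℕ) :=
  Fintype.piFinset fun l => Finset.range (if l = e then q l else q l + 1)

/-- The coefficient `a^{(γ,e)}_{t,z}` of the VN EXIT function. -/
def aVN {n k q : ℕ} (G : Matrix (Fin k) (Fin q) (ZMod 2)) (τ : Fin q → Fin n)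
    (e : Fin n) (t : Fin n → ℕ) (z : ℕ) : ℝ :=
  ((colCount τ e - t e : ℕ) : ℝ) *
      (eTilde G τ (fun l => colCount τ l - t l) (k - z) : ℝ)
    - ((t e + 1 : ℕ) : ℝ) *
      (eTilde G τ (fun l => colCount τ l - t l - (if l = e then 1 else 0)) (k - z) : ℝ)

/-- The coefficient `a^{(δ,e)}_{t}` of the CN EXIT function. -/
def aCN {n h s : ℕ} (G : Matrix (Fin h) (Fin s) (ZMod 2)) (τ : Fin s → Fin n)
    (e : Fin n) (t : Fin n → ℕ) : ℝ :=
  ((colCount τ e - t e : ℕ) : ℝ) *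
      (eTildeC G τ (fun l => colCount τ l - t l) : ℝ)
    - ((t e + 1 : ℕ) : ℝ) *
      (eTildeC G τ (fun l => colCount τ l - t l - (if l = e then 1 else 0)) : ℝ)

/-- Per-type VN EXIT function `I_{EV,e}^{(γ)}(I, ε)`. -/
def IEV {n k q : ℕ} (G : Matrix (Fin k) (Fin q) (ZMod 2)) (τ : Fin q → Fin n)
    (e : Fin n) (I : Fin n → ℝ) (ε : ℝ) : ℝ :=
  1 - (1 / (colCount τ e : ℝ)) *
    ∑ z ∈ Finset.range (k + 1), ε ^ z * (1 - ε) ^ (k - z) *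
      ∑ t ∈ tRange (colCount τ) e,
        (∏ l, (1 - I l) ^ t l * (I l) ^ (colCount τ l - t l - (if l = e then 1 else 0))) *
          aVN G τ e t z

/-- Per-type CN EXIT function `I_{EC,e}^{(δ)}(I)`. -/
def IEC {n h s : ℕ} (G : Matrix (Fin h) (Fin s) (ZMod 2)) (τ : Fin s → Fin n)
    (e : Fin n) (I : Fin n → ℝ) : ℝ :=
  1 - (1 / (colCount τ e : ℝ)) *
    ∑ t ∈ tRange (colCount τ) e,
      (∏ l, (1 - I l) ^ t l * (I l) ^ (colCount τ l - t l - (if l = e then 1 else 0))) *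
        aCN G τ e t

/-- A variable node type: a `k × q` generator matrix over `GF(2)` with a typing of its
columns by edge types (no punctured bits). -/
structure VNType (n : ℕ) where
  k : ℕ
  q : ℕ
  G : Matrix (Fin k) (Fin q) (ZMod 2)
  τ : Fin q → Fin n

/-- A check node type: an `h × s` generator matrix over `GF(2)` with a typing of its
columns by edge types. -/
structure CNType (n : ℕ) where
  h : ℕ
  s : ℕ
  G : Matrix (Fin h) (Fin s) (ZMod 2)
  τ : Fin s → Fin n

/-- The variable-node side of a MET D-GLDPC ensemble. -/
structure VNSide (n : ℕ) where
  nV : ℕ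
  vn : Fin nV → VNType n
  lam : Fin nV → Fin n → ℝ
  lam_nonneg : ∀ γ l, 0 ≤ lam γ l
  lam_sum : ∀ l, ∑ γ, lam γ l = 1
  lam_pos_iff : ∀ γ l, 0 < lam γ l ↔ 0 < colCount (vn γ).τ l

/-- The check-node side of a MET D-GLDPC ensemble. -/
structure CNSide (n : ℕ) where
  nC : ℕ
  cn : Fin nC → CNType n
  rho : Fin nC → Fin n → ℝ
  rho_nonneg : ∀ δ l, 0 ≤ rho δ l
  rho_sum : ∀ l, ∑ δ, rho δ l = 1
  rho_pos_iff : ∀ δ l, 0 < rho δ l ↔ 0 < colCount (cn δ).τ l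

/-- A MET D-GLDPC ensemble. -/
structure Ensemble (n : ℕ) extends VNSide n, CNSide n

/-- All VN local codes have full-rank generator matrix and minimum distance at least 2. -/
def VNSide.Good {n : ℕ} (V : VNSide n) : Prop :=
  ∀ γ, ((V.vn γ).G).rank = (V.vn γ).k ∧ HasMinDistGE2 (V.vn γ).G

/-- All CN local codes have full-rank generator matrix and minimum distance at least 2. -/
def CNSide.Good {n : ℕ} (C : CNSide n) : Prop :=
  ∀ δ, ((C.cn δ).G).rank = (C.cn δ).h ∧ HasMinDistGE2 (C.cn δ).G

/-- The matrix `P(ε)` with entries `P^{l,m}(ε)`. -/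
def Pmat {n : ℕ} (V : VNSide n) (ε : ℝ) : Matrix (Fin n) (Fin n) ℝ :=
  Matrix.of fun l m =>
    ∑ γ, if HasMinDistEq2 (V.vn γ).G then
      (V.lam γ l / (colCount (V.vn γ).τ l : ℝ)) *
        ∑ u ∈ Finset.Icc 1 (V.vn γ).k, (chi2 (V.vn γ).G (V.vn γ).τ u l m : ℝ) * ε ^ u
    else 0

/-- The matrix `C` with entries `C^{l,m}`. -/
def Cmat {n : ℕ} (C : CNSide n) : Matrix (Fin n) (Fin n) ℝ :=
  Matrix.of fun l m =>
    ∑ δ, if HasMinDistEq2 (C.cn δ).G then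
      (C.rho δ l / (colCount (C.cn δ).τ l : ℝ)) * (xi2 (C.cn δ).G (C.cn δ).τ l m : ℝ)
    else 0

/-- Aggregate VN EXIT function `I_{EV,e}(I,ε)`. -/
def IEVagg {n : ℕ} (V : VNSide n) (e : Fin n) (I : Fin n → ℝ) (ε : ℝ) : ℝ :=
  ∑ γ ∈ Finset.univ.filter (fun γ => 0 < V.lam γ e),
    V.lam γ e * IEV (V.vn γ).G (V.vn γ).τ e I ε

/-- Aggregate CN EXIT function `I_{EC,e}(I)`. -/
def IECagg {n : ℕ} (C : CNSide n) (e : Fin n) (I : Fin n → ℝ) : ℝ :=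
  ∑ δ ∈ Finset.univ.filter (fun δ => 0 < C.rho δ e),
    C.rho δ e * IEC (C.cn δ).G (C.cn δ).τ e I

/-- The EXIT recursion `f(·,ε)`. -/
def exitMap {n : ℕ} (E : Ensemble n) (ε : ℝ) (I : Fin n → ℝ) : Fin n → ℝ :=
  fun e => IEVagg E.toVNSide e (fun m => IECagg E.toCNSide m I) ε

/-- Local stability of the fixed point `1` of the EXIT recursion. -/
def LocallyStable {n : ℕ} (E : Ensemble n) (ε : ℝ) : Prop :=
  ∃ U : Set (Fin n → ℝ), IsOpen U ∧ (fun _ => (1 : ℝ)) ∈ U ∧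
    ∀ I ∈ U ∩ Set.Icc (fun _ => (0 : ℝ)) (fun _ => (1 : ℝ)),
      Filter.Tendsto (fun m => (exitMap E ε)^[m] I) Filter.atTop (nhds fun _ => (1 : ℝ))

/-- Spectral radius of a real square matrix: the maximum modulus of its complex
eigenvalues. -/
def specRad {m : ℕ} (A : Matrix (Fin m) (Fin m) ℝ) : ℝ :=
  (spectralRadius ℂ (A.map fun x : ℝ => (x : ℂ))).toReal


/- ===================== auxiliary lemmas ===================== -/
section Aux

open Finset in
lemma MET.aux_placeholder : True := trivial

namespace METAux
open MET Finset

variable {n h s : ℕ}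

instance instIsEmptyEmptyMem {k : ℕ} : IsEmpty {x // x ∈ (∅ : Finset (Fin k))} :=
  ⟨fun a => (Finset.notMem_empty _ a.2)⟩

/-- kernel of the "vanishing on A" condition -/
def kerA (G : Matrix (Fin h) (Fin s) (ZMod 2)) (A : Finset (Fin s)) :
    Submodule (ZMod 2) (Fin h → ZMod 2) where
  carrier := {x | ∀ a ∈ A, Matrix.vecMul x G a = 0}
  add_mem' := by
    intro x y hx hy a ha
    rw [Matrix.add_vecMul, Pi.add_apply, hx a ha, hy a ha, add_zero]
  zero_mem' := by intro a ha; rw [Matrix.zero_vecMul]; rfl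
  smul_mem' := by
    intro c x hx a ha
    rw [Matrix.smul_vecMul, Pi.smul_apply, hx a ha, smul_zero]

variable (G : Matrix (Fin h) (Fin s) (ZMod 2))

lemma mem_kerA {A : Finset (Fin s)} {x : Fin h → ZMod 2} :
    x ∈ kerA G A ↔ ∀ a ∈ A, Matrix.vecMul x G a = 0 := Iff.rfl

lemma colRank_add_finrank (A : Finset (Fin s)) :
    colRank G A ∅ + Module.finrank (ZMod 2) (kerA G A) = h := by
  classical
  set M : Matrix (Fin h) ({x // x ∈ A} ⊕ {x // x ∈ (∅ : Finset (Fin h))}) (ZMod 2) :=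
    Matrix.of fun i j =>
      Sum.elim (fun a => G i a.1) (fun t => if i = t.1 then (1 : ZMod 2) else 0) j with hM
  have hker : LinearMap.ker (Matrix.mulVecLin M.transpose) = kerA G A := by
    ext x
    constructor
    · intro hx a ha
      have := congrFun (LinearMap.mem_ker.mp hx) (Sum.inl ⟨a, ha⟩)
      simpa [hM, Matrix.mulVecLin, Matrix.mulVec, Matrix.vecMul, dotProduct,
        mul_comm] using this
    · intro hx
      apply LinearMap.mem_ker.mpr
      funext j
      cases j with
      | inl a =>
        have := hx a.1 a.2
        simpa [hM, Matrix.mulVecLin, Matrix.mulVec, Matrix.vecMul, dotProduct,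
          mul_comm] using this
      | inr t => exact isEmptyElim t
  have h1 : colRank G A ∅ = Matrix.rank M.transpose := (Matrix.rank_transpose M).symm
  rw [colRank] at h1 ⊢
  rw [h1, Matrix.rank, ← hker]
  rw [LinearMap.finrank_range_add_finrank_ker (Matrix.mulVecLin M.transpose)]
  simp [Module.finrank_fin_fun]

lemma vecMul_inj (hrk : G.rank = h) {x : Fin h → ZMod 2}
    (hx : Matrix.vecMul x G = 0) : x = 0 := by
  have h1 : (Matrix.transpose G).rank = h := by rw [Matrix.rank_transpose]; exact hrk
  have h2 := LinearMap.finrank_range_add_finrank_ker (Matrix.mulVecLin (Matrix.transpose G))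
  rw [Matrix.rank] at h1
  rw [h1, Module.finrank_fin_fun] at h2
  have h3 : Module.finrank (ZMod 2) (LinearMap.ker (Matrix.mulVecLin (Matrix.transpose G))) = 0 := by
    omega
  have h4 : LinearMap.ker (Matrix.mulVecLin (Matrix.transpose G)) = ⊥ :=
    Submodule.finrank_eq_zero.mp h3
  have h5 : x ∈ LinearMap.ker (Matrix.mulVecLin (Matrix.transpose G)) := by
    rw [LinearMap.mem_ker, Matrix.mulVecLin_apply, Matrix.mulVec_transpose, hx]
  rw [h4, Submodule.mem_bot] at h5
  exact h5

lemma zmod2_ne_zero {c : ZMod 2} (hc : c ≠ 0) : c = 1 := by revert hc; revert c; decide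

lemma kerA_bot (hrk : G.rank = h) (hmd : HasMinDistGE2 G) (A : Finset (Fin s))
    (hA : (Finset.univ \ A).card ≤ 1) : kerA G A = ⊥ := by
  ext x
  rw [mem_kerA, Submodule.mem_bot]
  constructor
  · intro hx
    by_contra hx0
    have hy : Matrix.vecMul x G ≠ 0 := fun hy => hx0 (vecMul_inj G hrk hy)
    have h2 := hmd x hy
    have hsub : (Finset.univ.filter fun a => Matrix.vecMul x G a ≠ 0) ⊆ Finset.univ \ A := by
      intro a ha
      simp only [Finset.mem_filter, Finset.mem_univ, true_and] at ha
      simp only [Finset.mem_sdiff, Finset.mem_univ, true_and]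
      exact fun haA => ha (hx a haA)
    have := (Finset.card_le_card hsub).trans hA
    rw [hWeight] at h2
    omega
  · intro hx; subst hx; intro a _; rw [Matrix.zero_vecMul]; rfl

lemma vecMul_eq_wt2vec (hrk : G.rank = h) (hmd : HasMinDistGE2 G) {i j : Fin s} (hij : i ≠ j)
    {x : Fin h → ZMod 2} (hx : x ∈ kerA G (Finset.univ \ {i, j})) (hx0 : x ≠ 0) :
    Matrix.vecMul x G = wt2vec i j := by
  set y := Matrix.vecMul x G with hy
  have hyne : y ≠ 0 := fun hh => hx0 (vecMul_inj G hrk hh)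
  have h2 := hmd x hyne
  have hsub : (Finset.univ.filter fun a => y a ≠ 0) ⊆ {i, j} := by
    intro a ha
    simp only [Finset.mem_filter, Finset.mem_univ, true_and] at ha
    by_contra hmem
    exact ha (hx a (by simp [Finset.mem_sdiff, hmem]))
  have hcard2 : ({i, j} : Finset (Fin s)).card = 2 := Finset.card_pair hij
  have heq : (Finset.univ.filter fun a => y a ≠ 0) = {i, j} := by
    apply Finset.eq_of_subset_of_card_le hsub
    rw [hcard2]; exact h2
  funext r
  rw [wt2vec]
  by_cases hr : r = i ∨ r = j
  · have hrmem : r ∈ (Finset.univ.filter fun a => y a ≠ 0) := by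
      rw [heq]; simp [Finset.mem_insert]; tauto
    simp only [Finset.mem_filter] at hrmem
    rw [if_pos hr]
    exact zmod2_ne_zero hrmem.2
  · rw [if_neg hr]
    by_contra hne
    have : r ∈ ({i, j} : Finset (Fin s)) := heq ▸ (by simp [hne])
    simp only [Finset.mem_insert, Finset.mem_singleton] at this
    tauto

lemma finrank_kerA_pair (hrk : G.rank = h) (hmd : HasMinDistGE2 G) {i j : Fin s} (hij : i ≠ j) :
    Module.finrank (ZMod 2) (kerA G (Finset.univ \ {i, j}))
      = if ∃ x, Matrix.vecMul x G = wt2vec i j then 1 else 0 := by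
  by_cases hex : ∃ x, Matrix.vecMul x G = wt2vec i j
  · rw [if_pos hex]
    obtain ⟨x₀, hx₀⟩ := hex
    have hx₀ne : x₀ ≠ 0 := by
      intro hh
      have : Matrix.vecMul x₀ G i = 1 := by rw [hx₀, wt2vec]; simp
      rw [hh, Matrix.zero_vecMul] at this
      simp at this
    have hker : kerA G (Finset.univ \ {i, j}) = Submodule.span (ZMod 2) {x₀} := by
      apply le_antisymm
      · intro x hx
        rcases eq_or_ne x 0 with h0 | h0
        · rw [h0]; exact Submodule.zero_mem _
        · have hxw := vecMul_eq_wt2vec G hrk hmd hij hx h0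
          have : Matrix.vecMul (x - x₀) G = 0 := by
            rw [Matrix.sub_vecMul, hxw, hx₀, sub_self]
          have hxx := vecMul_inj G hrk this
          have : x = x₀ := by rwa [sub_eq_zero] at hxx
          rw [this]
          exact Submodule.mem_span_singleton_self x₀
      · rw [Submodule.span_le, Set.singleton_subset_iff]
        intro a ha
        simp only [Finset.mem_sdiff, Finset.mem_univ, true_and, Finset.mem_insert,
          Finset.mem_singleton] at ha
        rw [hx₀, wt2vec, if_neg (by tauto)]
    rw [hker]
    exact finrank_span_singleton hx₀ne
  · rw [if_neg hex]
    have hker : kerA G (Finset.univ \ {i, j}) = ⊥ := by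
      ext x
      rw [Submodule.mem_bot]
      constructor
      · intro hx
        by_contra h0
        exact hex ⟨x, vecMul_eq_wt2vec G hrk hmd hij hx h0⟩
      · intro hx; subst hx; exact Submodule.zero_mem _
    rw [hker, finrank_bot]

lemma colRank_full (hrk : G.rank = h) (hmd : HasMinDistGE2 G) {A : Finset (Fin s)}
    (hA : (Finset.univ \ A).card ≤ 1) : colRank G A ∅ = h := by
  have := colRank_add_finrank G A
  rw [kerA_bot G hrk hmd A hA, finrank_bot] at this
  omega

lemma colRank_pair (hrk : G.rank = h) (hmd : HasMinDistGE2 G) {i j : Fin s} (hij : i ≠ j) :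
    colRank G (Finset.univ \ {i, j}) ∅
      + (if ∃ x, Matrix.vecMul x G = wt2vec i j then 1 else 0) = h := by
  have := colRank_add_finrank G (Finset.univ \ {i, j})
  rwa [finrank_kerA_pair G hrk hmd hij] at this

lemma wt2vec_comm {q : ℕ} (i j : Fin q) : wt2vec i j = wt2vec j i := by
  funext r; simp [wt2vec, or_comm]

end METAux
end Aux

namespace METAux
open MET Finset

variable {n h s : ℕ} (τ : Fin s → Fin n)

lemma filter_sdiff_eq (A : Finset (Fin s)) (l' : Fin n) :
    ((Finset.univ \ A).filter fun x => τ x = l') = (Finset.univ.filter fun x => τ x = l') \ A := by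
  ext x; simp [Finset.mem_sdiff, Finset.mem_filter]; tauto

lemma card_sdiff_pair {α : Type*} [DecidableEq α] (T : Finset α) {i j : α} (hij : i ≠ j) :
    (T \ {i, j}).card = T.card - (if i ∈ T then 1 else 0) - (if j ∈ T then 1 else 0) := by
  have h1 : T \ {i, j} = (T.erase i).erase j := by
    ext x; simp [Finset.mem_sdiff, Finset.mem_erase]; tauto
  rw [h1, Finset.card_erase_eq_ite, Finset.card_erase_eq_ite]
  have hj : j ∈ T.erase i ↔ j ∈ T := by
    simp [Finset.mem_erase, hij.symm]
  by_cases hi : i ∈ T <;> by_cases hjT : j ∈ T <;>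
    simp only [hi, hjT, if_true, if_false, hj] <;> omega

lemma card_compl_fiberwise (A : Finset (Fin s)) :
    (Finset.univ \ A).card
      = ∑ l' : Fin n, ((Finset.univ.filter fun x => τ x = l') \ A).card := by
  rw [Finset.card_eq_sum_card_fiberwise (f := τ) (t := Finset.univ) (fun x _ => Finset.mem_univ _)]
  refine Finset.sum_congr rfl fun l' _ => ?_
  rw [filter_sdiff_eq]

lemma card_missing (A : Finset (Fin s)) (l' : Fin n) (d : ℕ)
    (hd : d ≤ colCount τ l')
    (hA : (A.filter fun x => τ x = l').card = colCount τ l' - d) :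
    ((Finset.univ.filter fun x => τ x = l') \ A).card = d := by
  set T := Finset.univ.filter fun x => τ x = l' with hT
  have h1 : (T ∩ A).card = (A.filter fun x => τ x = l').card := by
    congr 1; ext x; simp [hT, Finset.mem_filter, Finset.mem_inter]; tauto
  have h2 : (T ∩ A).card + (T \ A).card = T.card := Finset.card_inter_add_card_sdiff T A
  have hTc : T.card = colCount τ l' := rfl
  omega

lemma compl_pair_inv {A : Finset (Fin s)} {B : Finset (Fin s)}
    (hAB : Finset.univ \ A = B) : A = Finset.univ \ B := by
  rw [← hAB, Finset.sdiff_sdiff_eq_self (Finset.subset_univ A)]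

/-- characterization of subsets with one type-`e` column missing -/
lemma S1_char {e : Fin n} (he : 0 < colCount τ e) {A : Finset (Fin s)}
    (hA : ∀ l', (A.filter fun x => τ x = l').card
        = colCount τ l' - (if l' = e then 1 else 0)) :
    ∃ j, τ j = e ∧ A = Finset.univ \ {j} := by
  have hmiss : ∀ l', ((Finset.univ.filter fun x => τ x = l') \ A).card
      = if l' = e then 1 else 0 := by
    intro l'
    apply card_missing τ A l'
    · by_cases hle : l' = e
      · subst hle; simpa [Nat.one_le_iff_ne_zero, Nat.pos_iff_ne_zero] using he
      · simp [hle]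
    · exact hA l'
  have hcard : (Finset.univ \ A).card = 1 := by
    calc (Finset.univ \ A).card
        = ∑ l' : Fin n, ((Finset.univ.filter fun x => τ x = l') \ A).card :=
          card_compl_fiberwise τ A
      _ = ∑ l' : Fin n, (if l' = e then 1 else 0) :=
          Finset.sum_congr rfl fun l' _ => hmiss l'
      _ = 1 := by simp [Finset.sum_ite_eq']
  obtain ⟨j, hj⟩ := Finset.card_eq_one.mp hcard
  have hjA : j ∉ A := by
    have : j ∈ Finset.univ \ A := hj ▸ Finset.mem_singleton_self j
    exact (Finset.mem_sdiff.mp this).2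
  have hτj : τ j = e := by
    by_contra hne
    have h0 : ((Finset.univ.filter fun x => τ x = τ j) \ A).card = 0 := by
      rw [hmiss (τ j), if_neg hne]
    have : j ∈ (Finset.univ.filter fun x => τ x = τ j) \ A := by
      simp [Finset.mem_sdiff, Finset.mem_filter, hjA]
    rw [Finset.card_eq_zero] at h0
    rw [h0] at this
    exact absurd this (Finset.notMem_empty j)
  exact ⟨j, hτj, compl_pair_inv hj⟩

lemma S1_mem {e : Fin n} {j : Fin s} (hj : τ j = e) :
    ∀ l', ((Finset.univ \ {j}).filter fun x => τ x = l').card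
        = colCount τ l' - (if l' = e then 1 else 0) := by
  intro l'
  rw [filter_sdiff_eq]
  have h1 : (Finset.univ.filter fun x => τ x = l') \ {j}
      = (Finset.univ.filter fun x => τ x = l').erase j := by
    ext x; simp [Finset.mem_sdiff, Finset.mem_erase]; tauto
  rw [h1, Finset.card_erase_eq_ite]
  have hmem : j ∈ (Finset.univ.filter fun x => τ x = l') ↔ l' = e := by
    simp [Finset.mem_filter, hj, eq_comm]
  by_cases hle : l' = e
  · subst hle
    rw [if_pos (hmem.mpr rfl), if_pos rfl]
    rfl
  · rw [if_neg (fun hh => hle (hmem.mp hh)), if_neg hle, Nat.sub_zero]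
    rfl

/-- characterization of subsets with one type-`m` and one type-`l` column missing -/
lemma S2_char {m l : Fin n} (hm : 0 < colCount τ m) (hl : 0 < colCount τ l)
    (hml : m = l → 2 ≤ colCount τ l) {A : Finset (Fin s)}
    (hA : ∀ l', (A.filter fun x => τ x = l').card
        = colCount τ l' - (if l' = m then 1 else 0) - (if l' = l then 1 else 0)) :
    ∃ i j, i ≠ j ∧ τ i = m ∧ τ j = l ∧ A = Finset.univ \ {i, j} := by
  have hmiss : ∀ l', ((Finset.univ.filter fun x => τ x = l') \ A).card
      = (if l' = m then 1 else 0) + (if l' = l then 1 else 0) := by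
    intro l'
    apply card_missing τ A l'
    · by_cases h1 : l' = m <;> by_cases h2 : l' = l
      · subst h1; subst h2; simpa using hml rfl
      · subst h1; simpa [Nat.one_le_iff_ne_zero, Nat.pos_iff_ne_zero, h2] using hm
      · subst h2; simpa [Nat.one_le_iff_ne_zero, Nat.pos_iff_ne_zero, h1] using hl
      · simp [h1, h2]
    · rw [hA l']; omega
  have hcard : (Finset.univ \ A).card = 2 := by
    calc (Finset.univ \ A).card
        = ∑ l' : Fin n, ((Finset.univ.filter fun x => τ x = l') \ A).card :=
          card_compl_fiberwise τ A
      _ = ∑ l' : Fin n, ((if l' = m then 1 else 0) + (if l' = l then 1 else 0)) :=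
          Finset.sum_congr rfl fun l' _ => hmiss l'
      _ = 2 := by rw [Finset.sum_add_distrib]; simp [Finset.sum_ite_eq']
  by_cases hml' : m = l
  · subst hml'
    have h2 : ((Finset.univ.filter fun x => τ x = m) \ A).card = 2 := by
      rw [hmiss m]; simp
    obtain ⟨i, j, hij, hset⟩ := Finset.card_eq_two.mp h2
    have hsub : ({i, j} : Finset (Fin s)) ⊆ Finset.univ \ A := by
      rw [← hset]
      exact Finset.sdiff_subset_sdiff (Finset.filter_subset _ _) (le_refl _)
    have huniv : Finset.univ \ A = {i, j} := by
      symm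
      apply Finset.eq_of_subset_of_card_le hsub
      rw [hcard, Finset.card_pair hij]
    have hi : i ∈ (Finset.univ.filter fun x => τ x = m) := by
      have : i ∈ (Finset.univ.filter fun x => τ x = m) \ A := hset ▸ (by simp)
      exact (Finset.mem_sdiff.mp this).1
    have hjm : j ∈ (Finset.univ.filter fun x => τ x = m) := by
      have : j ∈ (Finset.univ.filter fun x => τ x = m) \ A := hset ▸ (by simp)
      exact (Finset.mem_sdiff.mp this).1
    exact ⟨i, j, hij, (Finset.mem_filter.mp hi).2, (Finset.mem_filter.mp hjm).2,
      compl_pair_inv huniv⟩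
  · have h1 : ((Finset.univ.filter fun x => τ x = m) \ A).card = 1 := by
      rw [hmiss m, if_pos rfl, if_neg hml']
    have h2 : ((Finset.univ.filter fun x => τ x = l) \ A).card = 1 := by
      rw [hmiss l, if_neg (fun hh : l = m => hml' hh.symm), if_pos rfl]
    obtain ⟨i, hi⟩ := Finset.card_eq_one.mp h1
    obtain ⟨j, hj⟩ := Finset.card_eq_one.mp h2
    have hiA : i ∈ (Finset.univ.filter fun x => τ x = m) \ A := hi ▸ Finset.mem_singleton_self i
    have hjA : j ∈ (Finset.univ.filter fun x => τ x = l) \ A := hj ▸ Finset.mem_singleton_self j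
    rw [Finset.mem_sdiff, Finset.mem_filter] at hiA hjA
    have hij : i ≠ j := by
      intro hh
      rw [hh] at hiA
      exact hml' (hiA.1.2 ▸ hjA.1.2 ▸ rfl)
    have hsub : ({i, j} : Finset (Fin s)) ⊆ Finset.univ \ A := by
      intro x hx
      rcases Finset.mem_insert.mp hx with hx | hx
      · subst hx; exact Finset.mem_sdiff.mpr ⟨Finset.mem_univ _, hiA.2⟩
      · rw [Finset.mem_singleton] at hx; subst hx
        exact Finset.mem_sdiff.mpr ⟨Finset.mem_univ _, hjA.2⟩
    have huniv : Finset.univ \ A = {i, j} := by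
      symm
      apply Finset.eq_of_subset_of_card_le hsub
      rw [hcard, Finset.card_pair hij]
    exact ⟨i, j, hij, hiA.1.2, hjA.1.2, compl_pair_inv huniv⟩

lemma S2_mem {m l : Fin n} {i j : Fin s} (hij : i ≠ j) (hi : τ i = m) (hj : τ j = l) :
    ∀ l', ((Finset.univ \ {i, j}).filter fun x => τ x = l').card
        = colCount τ l' - (if l' = m then 1 else 0) - (if l' = l then 1 else 0) := by
  intro l'
  rw [filter_sdiff_eq, card_sdiff_pair _ hij]
  have h1 : (i ∈ Finset.univ.filter fun x => τ x = l') ↔ l' = m := by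
    simp [Finset.mem_filter, hi, eq_comm]
  have h2 : (j ∈ Finset.univ.filter fun x => τ x = l') ↔ l' = l := by
    simp [Finset.mem_filter, hj, eq_comm]
  have hTc : (Finset.univ.filter fun x => τ x = l').card = colCount τ l' := rfl
  have e1 : (if i ∈ Finset.univ.filter fun x => τ x = l' then 1 else 0)
      = (if l' = m then 1 else 0) := by
    by_cases hm' : l' = m <;> simp [h1, hm', hi]
  have e2 : (if j ∈ Finset.univ.filter fun x => τ x = l' then 1 else 0)
      = (if l' = l then 1 else 0) := by
    by_cases hl' : l' = l <;> simp [h2, hl', hj]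
  rw [e1, e2, hTc]

lemma pair_sdiff_inj {i j i' j' : Fin s} (hij : i ≠ j)
    (heq : Finset.univ \ ({i, j} : Finset (Fin s)) = Finset.univ \ {i', j'}) :
    ({i, j} : Finset (Fin s)) = {i', j'} := by
  have h1 := compl_pair_inv (A := ({i, j} : Finset (Fin s))) (B := Finset.univ \ {i', j'}) heq
  rw [Finset.sdiff_sdiff_eq_self (Finset.subset_univ _)] at h1
  exact h1

end METAux

namespace METAux
open MET Finset

variable {n h s : ℕ} (G : Matrix (Fin h) (Fin s) (ZMod 2)) (τ : Fin s → Fin n)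

lemma compl_compl_fin (B : Finset (Fin s)) :
    Finset.univ \ (Finset.univ \ B) = B :=
  Finset.sdiff_sdiff_eq_self (Finset.subset_univ B)

lemma eTildeC_full (hrk : G.rank = h) (hmd : HasMinDistGE2 G) :
    eTildeC G τ (fun l' => colCount τ l') = h := by
  have hfil : (Finset.univ.filter (fun A : Finset (Fin s) =>
      ∀ l, (A.filter fun j => τ j = l).card = colCount τ l)) = {Finset.univ} := by
    ext A
    simp only [Finset.mem_filter, Finset.mem_univ, true_and, Finset.mem_singleton]
    constructor
    · intro hA
      have hmiss : ∀ l', ((Finset.univ.filter fun x => τ x = l') \ A).card = 0 := by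
        intro l'
        apply card_missing τ A l' 0 (Nat.zero_le _)
        simpa using hA l'
      have hcard : (Finset.univ \ A).card = 0 := by
        calc (Finset.univ \ A).card
            = ∑ l' : Fin n, ((Finset.univ.filter fun x => τ x = l') \ A).card :=
              card_compl_fiberwise τ A
          _ = ∑ _l' : Fin n, 0 := Finset.sum_congr rfl fun l' _ => hmiss l'
          _ = 0 := by simp
      have : Finset.univ \ A = ∅ := Finset.card_eq_zero.mp hcard
      have := compl_pair_inv this
      simpa using this
    · intro hA; subst hA; intro l; rfl
  rw [eTildeC, hfil, Finset.sum_singleton]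
  apply colRank_full G hrk hmd
  simp

lemma eTildeC_erase (hrk : G.rank = h) (hmd : HasMinDistGE2 G) {e : Fin n}
    (he : 0 < colCount τ e) :
    eTildeC G τ (fun l' => colCount τ l' - if l' = e then 1 else 0) = colCount τ e * h := by
  rw [eTildeC]
  have key : ∑ j ∈ Finset.univ.filter (fun j => τ j = e),
      colRank G (Finset.univ \ {j}) ∅
      = ∑ A ∈ Finset.univ.filter (fun A : Finset (Fin s) =>
          ∀ l, (A.filter fun j => τ j = l).card
            = colCount τ l - if l = e then 1 else 0), colRank G A ∅ := by
    apply Finset.sum_bij (fun j _ => Finset.univ \ {j})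
    · intro j hj
      simp only [Finset.mem_filter, Finset.mem_univ, true_and] at hj ⊢
      exact S1_mem τ hj
    · intro j₁ h₁ j₂ h₂ heq
      have : ({j₁} : Finset (Fin s)) = {j₂} := by
        rw [← compl_compl_fin ({j₁} : Finset (Fin s)), heq, compl_compl_fin]
      exact Finset.singleton_injective this
    · intro A hA
      simp only [Finset.mem_filter, Finset.mem_univ, true_and] at hA
      obtain ⟨j, hje, hAj⟩ := S1_char τ he hA
      exact ⟨j, by simp [hje], hAj.symm⟩
    · intro j hj; rfl
  rw [← key]
  have hterm : ∀ j ∈ Finset.univ.filter (fun j => τ j = e),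
      colRank G (Finset.univ \ {j}) ∅ = h := by
    intro j _
    apply colRank_full G hrk hmd
    rw [compl_compl_fin]
    simp
  rw [Finset.sum_congr rfl hterm, Finset.sum_const, smul_eq_mul]
  rfl

lemma eTildeC_pair_ne (hrk : G.rank = h) (hmd : HasMinDistGE2 G) {m l : Fin n}
    (hml : m ≠ l) (hm : 0 < colCount τ m) (hl : 0 < colCount τ l) :
    eTildeC G τ (fun l' => colCount τ l' - (if l' = m then 1 else 0)
        - (if l' = l then 1 else 0)) + xi2 G τ l m
      = colCount τ m * colCount τ l * h := by
  classical
  set Q := Finset.univ.filter (fun p : Fin s × Fin s => τ p.1 = m ∧ τ p.2 = l) with hQ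
  have hQne : ∀ p : Fin s × Fin s, p ∈ Q → p.1 ≠ p.2 := by
    intro p hp
    simp only [hQ, Finset.mem_filter, Finset.mem_univ, true_and] at hp
    intro hc
    exact hml (hp.1 ▸ hp.2 ▸ (congrArg τ hc))
  have step1 : eTildeC G τ (fun l' => colCount τ l' - (if l' = m then 1 else 0)
      - (if l' = l then 1 else 0))
      = ∑ p ∈ Q, colRank G (Finset.univ \ {p.1, p.2}) ∅ := by
    rw [eTildeC]
    symm
    apply Finset.sum_bij (fun p _ => Finset.univ \ ({p.1, p.2} : Finset (Fin s)))
    · intro p hp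
      have hne := hQne p hp
      simp only [hQ, Finset.mem_filter, Finset.mem_univ, true_and] at hp ⊢
      exact S2_mem τ hne hp.1 hp.2
    · intro p h₁ q h₂ heq
      have hpair := pair_sdiff_inj (hQne p h₁) heq
      simp only [hQ, Finset.mem_filter, Finset.mem_univ, true_and] at h₁ h₂
      have hp1 : p.1 = q.1 ∨ p.1 = q.2 := by
        have : p.1 ∈ ({q.1, q.2} : Finset (Fin s)) := hpair ▸ (by simp)
        simpa using this
      have hp2 : p.2 = q.1 ∨ p.2 = q.2 := by
        have : p.2 ∈ ({q.1, q.2} : Finset (Fin s)) := hpair ▸ (by simp)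
        simpa using this
      have e1 : p.1 = q.1 := by
        rcases hp1 with h | h
        · exact h
        · exact absurd (h ▸ h₁.1 : τ q.2 = m) (by rw [h₂.2]; exact fun hh => hml hh.symm)
      have e2 : p.2 = q.2 := by
        rcases hp2 with h | h
        · exact absurd (h ▸ h₁.2 : τ q.1 = l) (by rw [h₂.1]; exact fun hh => hml hh)
        · exact h
      exact Prod.ext e1 e2
    · intro A hA
      simp only [Finset.mem_filter, Finset.mem_univ, true_and] at hA
      obtain ⟨i, j, hij, hi, hj, hAij⟩ := S2_char τ hm hl (fun hc => absurd hc hml) hA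
      exact ⟨(i, j), by simp [hQ, hi, hj], hAij.symm⟩
    · intro p hp; rfl
  have step2 : ∑ p ∈ Q, (colRank G (Finset.univ \ {p.1, p.2}) ∅
      + if ∃ x, Matrix.vecMul x G = wt2vec p.1 p.2 then 1 else 0) = Q.card * h := by
    rw [Finset.sum_congr rfl (fun p hp => colRank_pair G hrk hmd (hQne p hp)),
      Finset.sum_const, smul_eq_mul]
  have step3 : ∑ p ∈ Q, (if ∃ x, Matrix.vecMul x G = wt2vec p.1 p.2 then 1 else 0)
      = xi2 G τ l m := by
    rw [Finset.sum_ite, Finset.sum_const, Finset.sum_const]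
    simp only [smul_eq_mul, mul_one, mul_zero, add_zero]
    rw [xi2]
    apply Finset.card_nbij' Prod.swap Prod.swap
    · intro p hp
      simp only [Finset.mem_coe, hQ, Finset.mem_filter, Finset.mem_univ, true_and] at hp ⊢
      obtain ⟨⟨h1, h2⟩, h3⟩ := hp
      refine ⟨fun hc => hml (h1 ▸ h2 ▸ (congrArg τ hc.symm)), h2, h1, ?_⟩
      obtain ⟨x, hx⟩ := h3
      exact ⟨x, by rwa [wt2vec_comm] at hx⟩
    · intro p hp
      simp only [Finset.mem_coe, hQ, Finset.mem_filter, Finset.mem_univ, true_and] at hp ⊢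
      obtain ⟨h0, h1, h2, h3⟩ := hp
      refine ⟨⟨h2, h1⟩, ?_⟩
      obtain ⟨x, hx⟩ := h3
      exact ⟨x, by rwa [wt2vec_comm] at hx⟩
    · intro p _; simp
    · intro p _; simp
  have step4 : Q.card = colCount τ m * colCount τ l := by
    have : Q = (Finset.univ.filter fun j => τ j = m) ×ˢ (Finset.univ.filter fun j => τ j = l) := by
      ext p
      simp [hQ, Finset.mem_product, Finset.mem_filter]
    rw [this, Finset.card_product]
    rfl
  calc eTildeC G τ (fun l' => colCount τ l' - (if l' = m then 1 else 0)
        - (if l' = l then 1 else 0)) + xi2 G τ l m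
      = ∑ p ∈ Q, colRank G (Finset.univ \ {p.1, p.2}) ∅
        + ∑ p ∈ Q, (if ∃ x, Matrix.vecMul x G = wt2vec p.1 p.2 then 1 else 0) := by
        rw [step1, step3]
    _ = ∑ p ∈ Q, (colRank G (Finset.univ \ {p.1, p.2}) ∅
        + if ∃ x, Matrix.vecMul x G = wt2vec p.1 p.2 then 1 else 0) :=
        (Finset.sum_add_distrib).symm
    _ = Q.card * h := step2
    _ = colCount τ m * colCount τ l * h := by rw [step4]

end METAux

namespace METAux
open MET Finset

variable {n h s : ℕ} (G : Matrix (Fin h) (Fin s) (ZMod 2)) (τ : Fin s → Fin n)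

lemma sum_split_sym {l : Fin n} (F : Fin s × Fin s → ℕ) (hF : ∀ p, F p.swap = F p) :
    ∑ p ∈ Finset.univ.filter
        (fun p : Fin s × Fin s => p.1 ≠ p.2 ∧ τ p.1 = l ∧ τ p.2 = l), F p
      = 2 * ∑ p ∈ Finset.univ.filter
        (fun p : Fin s × Fin s => p.1 < p.2 ∧ τ p.1 = l ∧ τ p.2 = l), F p := by
  classical
  set P' := Finset.univ.filter (fun p : Fin s × Fin s => p.1 ≠ p.2 ∧ τ p.1 = l ∧ τ p.2 = l)
  set Plt := Finset.univ.filter (fun p : Fin s × Fin s => p.1 < p.2 ∧ τ p.1 = l ∧ τ p.2 = l)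
  set Pgt := Finset.univ.filter (fun p : Fin s × Fin s => p.2 < p.1 ∧ τ p.1 = l ∧ τ p.2 = l)
    with hPgt
  have e1 : P'.filter (fun p => p.1 < p.2) = Plt := by
    ext p
    simp only [P', Plt, Finset.mem_filter, Finset.mem_univ, true_and]
    constructor
    · rintro ⟨⟨_, h1, h2⟩, hlt⟩; exact ⟨hlt, h1, h2⟩
    · rintro ⟨hlt, h1, h2⟩; exact ⟨⟨ne_of_lt hlt, h1, h2⟩, hlt⟩
  have e2 : P'.filter (fun p => ¬ p.1 < p.2) = Pgt := by
    ext p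
    simp only [P', Pgt, Finset.mem_filter, Finset.mem_univ, true_and]
    constructor
    · rintro ⟨⟨hne, h1, h2⟩, hnlt⟩
      exact ⟨lt_of_le_of_ne (le_of_not_gt hnlt) hne.symm, h1, h2⟩
    · rintro ⟨hlt, h1, h2⟩
      exact ⟨⟨(ne_of_lt hlt).symm, h1, h2⟩, not_lt_of_gt hlt⟩
  have e3 : ∑ p ∈ Pgt, F p = ∑ p ∈ Plt, F p := by
    apply Finset.sum_nbij' Prod.swap Prod.swap
    · intro p hp
      simp only [Pgt, Plt, Finset.mem_filter, Finset.mem_univ, true_and] at hp ⊢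
      exact ⟨hp.1, hp.2.2, hp.2.1⟩
    · intro p hp
      simp only [Pgt, Plt, Finset.mem_filter, Finset.mem_univ, true_and] at hp ⊢
      exact ⟨hp.1, hp.2.2, hp.2.1⟩
    · intro p _; simp
    · intro p _; simp
    · intro p _; exact (hF p).symm
  rw [← Finset.sum_filter_add_sum_filter_not P' (fun p => p.1 < p.2), e1, e2, e3, two_mul]

lemma eTildeC_pair_eq (hrk : G.rank = h) (hmd : HasMinDistGE2 G) {l : Fin n}
    (hl2 : 2 ≤ colCount τ l) :
    2 * eTildeC G τ (fun l' => colCount τ l' - (if l' = l then 1 else 0)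
        - (if l' = l then 1 else 0)) + xi2 G τ l l
      = colCount τ l * (colCount τ l - 1) * h := by
  classical
  set Plt := Finset.univ.filter
    (fun p : Fin s × Fin s => p.1 < p.2 ∧ τ p.1 = l ∧ τ p.2 = l) with hPlt
  set P' := Finset.univ.filter
    (fun p : Fin s × Fin s => p.1 ≠ p.2 ∧ τ p.1 = l ∧ τ p.2 = l) with hP'
  have step1 : eTildeC G τ (fun l' => colCount τ l' - (if l' = l then 1 else 0)
      - (if l' = l then 1 else 0))
      = ∑ p ∈ Plt, colRank G (Finset.univ \ {p.1, p.2}) ∅ := by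
    rw [eTildeC]
    symm
    apply Finset.sum_bij (fun p _ => Finset.univ \ ({p.1, p.2} : Finset (Fin s)))
    · intro p hp
      simp only [hPlt, Finset.mem_filter, Finset.mem_univ, true_and] at hp ⊢
      exact S2_mem τ (ne_of_lt hp.1) hp.2.1 hp.2.2
    · intro p h₁ q h₂ heq
      simp only [hPlt, Finset.mem_filter, Finset.mem_univ, true_and] at h₁ h₂
      have hpair := pair_sdiff_inj (ne_of_lt h₁.1) heq
      have hp1 : p.1 = q.1 ∨ p.1 = q.2 := by
        have : p.1 ∈ ({q.1, q.2} : Finset (Fin s)) := hpair ▸ (by simp)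
        simpa using this
      have hp2 : p.2 = q.1 ∨ p.2 = q.2 := by
        have : p.2 ∈ ({q.1, q.2} : Finset (Fin s)) := hpair ▸ (by simp)
        simpa using this
      have hq1 : q.1 = p.1 ∨ q.1 = p.2 := by
        have : q.1 ∈ ({p.1, p.2} : Finset (Fin s)) := hpair ▸ (by simp)
        simpa using this
      rcases hp1 with ha | ha
      · rcases hp2 with hb | hb
        · exfalso
          have h1' := h₁.1
          rw [ha, hb] at h1'
          exact lt_irrefl q.1 h1'
        · exact Prod.ext ha hb
      · -- p.1 = q.2 : impossible
        exfalso
        rcases hq1 with hc | hc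
        · have h1' := h₂.1
          rw [hc, ← ha] at h1'
          exact lt_irrefl p.1 h1'
        · have h1' := h₂.1
          rw [hc, ← ha] at h1'
          exact (lt_asymm h₁.1) h1'
    · intro A hA
      simp only [Finset.mem_filter, Finset.mem_univ, true_and] at hA
      obtain ⟨i, j, hij, hi, hj, hAij⟩ :=
        S2_char τ (by omega) (by omega) (fun _ => hl2) hA
      rcases hij.lt_or_gt with hlt | hlt
      · exact ⟨(i, j), by simp [hPlt, hi, hj, hlt], hAij.symm⟩
      · refine ⟨(j, i), by simp [hPlt, hi, hj, hlt], ?_⟩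
        rw [hAij, Finset.pair_comm]
    · intro p hp; rfl
  have step2 : ∑ p ∈ Plt, (colRank G (Finset.univ \ {p.1, p.2}) ∅
      + if ∃ x, Matrix.vecMul x G = wt2vec p.1 p.2 then 1 else 0) = Plt.card * h := by
    have hterm : ∀ p ∈ Plt, colRank G (Finset.univ \ {p.1, p.2}) ∅
        + (if ∃ x, Matrix.vecMul x G = wt2vec p.1 p.2 then 1 else 0) = h := by
      intro p hp
      simp only [hPlt, Finset.mem_filter, Finset.mem_univ, true_and] at hp
      exact colRank_pair G hrk hmd (ne_of_lt hp.1)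
    rw [Finset.sum_congr rfl hterm, Finset.sum_const, smul_eq_mul]
  have hsym : ∀ p : Fin s × Fin s,
      (if ∃ x, Matrix.vecMul x G = wt2vec (Prod.swap p).1 (Prod.swap p).2 then 1 else 0)
        = (if ∃ x, Matrix.vecMul x G = wt2vec p.1 p.2 then 1 else 0) := by
    intro p
    simp only [Prod.fst_swap, Prod.snd_swap]
    simp only [show wt2vec p.2 p.1 = wt2vec p.1 p.2 from wt2vec_comm _ _]
  have step3 : ∑ p ∈ P', (if ∃ x, Matrix.vecMul x G = wt2vec p.1 p.2 then 1 else 0)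
      = 2 * ∑ p ∈ Plt, (if ∃ x, Matrix.vecMul x G = wt2vec p.1 p.2 then 1 else 0) :=
    sum_split_sym τ _ hsym
  have step4 : ∑ p ∈ P', (if ∃ x, Matrix.vecMul x G = wt2vec p.1 p.2 then 1 else 0)
      = xi2 G τ l l := by
    rw [Finset.sum_ite, Finset.sum_const, Finset.sum_const]
    simp only [smul_eq_mul, mul_one, mul_zero, add_zero]
    rw [xi2]
    congr 1
    ext p
    simp only [hP', Finset.mem_filter, Finset.mem_univ, true_and]
    tauto
  have step5 : P'.card = 2 * Plt.card := by
    have := sum_split_sym (s := s) τ (l := l) (fun _ => 1) (fun _ => rfl)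
    simpa using this
  have step6 : P'.card = colCount τ l * (colCount τ l - 1) := by
    have hprod : P' = ((Finset.univ.filter fun j => τ j = l) ×ˢ
        (Finset.univ.filter fun j => τ j = l)).filter (fun p => p.1 ≠ p.2) := by
      ext p
      simp only [hP', Finset.mem_filter, Finset.mem_univ, true_and, Finset.mem_product]
      tauto
    have hdiag : (((Finset.univ.filter fun j => τ j = l) ×ˢ
        (Finset.univ.filter fun j => τ j = l)).filter (fun p => p.1 = p.2)).card
        = colCount τ l := by
      rw [colCount]
      apply Finset.card_nbij' (fun p => p.1) (fun i => (i, i))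
      · intro p hp
        simp only [Finset.mem_coe, Finset.mem_filter, Finset.mem_product] at hp ⊢
        exact ⟨Finset.mem_univ _, hp.1.1.2⟩
      · intro i hi
        simp only [Finset.mem_coe, Finset.mem_filter, Finset.mem_product] at hi ⊢
        simp [hi.2]
      · intro p hp
        simp only [Finset.mem_coe, Finset.mem_filter, Finset.mem_product] at hp
        exact (Prod.ext rfl hp.2)
      · intro i _; rfl
    have hsplit := Finset.card_filter_add_card_filter_not
      (s := (Finset.univ.filter fun j => τ j = l) ×ˢ (Finset.univ.filter fun j => τ j = l))
      (p := fun p => p.1 = p.2)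
    rw [Finset.card_product] at hsplit
    have hcc : (Finset.univ.filter fun j => τ j = l).card = colCount τ l := rfl
    rw [hcc, hdiag] at hsplit
    have hne_eq : (((Finset.univ.filter fun j => τ j = l) ×ˢ
        (Finset.univ.filter fun j => τ j = l)).filter (fun p => ¬ p.1 = p.2)) = P' := by
      rw [hprod]
    have hP'card : P'.card = colCount τ l * colCount τ l - colCount τ l := by
      rw [← hne_eq]
      have h' := hsplit
      rw [Nat.add_comm] at h'
      exact Nat.eq_sub_of_add_eq h'
    rw [hP'card]
    rcases Nat.exists_eq_add_of_le hl2 with ⟨k, hk⟩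
    rw [hk]
    have h1 : 2 + k - 1 = 1 + k := by omega
    rw [h1]
    have h2 : (2 + k) * (2 + k) = (2 + k) * (1 + k) + (2 + k) := by ring
    rw [h2, Nat.add_sub_cancel]
  calc 2 * eTildeC G τ (fun l' => colCount τ l' - (if l' = l then 1 else 0)
        - (if l' = l then 1 else 0)) + xi2 G τ l l
      = 2 * ∑ p ∈ Plt, colRank G (Finset.univ \ {p.1, p.2}) ∅
        + 2 * ∑ p ∈ Plt, (if ∃ x, Matrix.vecMul x G = wt2vec p.1 p.2 then 1 else 0) := by
        rw [step1, ← step3, step4]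
    _ = 2 * (∑ p ∈ Plt, (colRank G (Finset.univ \ {p.1, p.2}) ∅
        + if ∃ x, Matrix.vecMul x G = wt2vec p.1 p.2 then 1 else 0)) := by
        rw [Finset.sum_add_distrib]; ring
    _ = 2 * (Plt.card * h) := by rw [step2]
    _ = P'.card * h := by rw [step5]; ring
    _ = colCount τ l * (colCount τ l - 1) * h := by rw [step6]

end METAux

namespace METAux
open MET Finset

variable {n h s : ℕ} (G : Matrix (Fin h) (Fin s) (ZMod 2)) (τ : Fin s → Fin n)

lemma aCN_t0 (hrk : G.rank = h) (hmd : HasMinDistGE2 G) {l : Fin n}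
    (hl : 0 < colCount τ l) : aCN G τ l (fun _ => 0) = 0 := by
  rw [aCN]
  have e1 : (fun l' => colCount τ l' - (fun _ => 0) l') = fun l' => colCount τ l' := by
    funext l'; simp
  have e2 : (fun l' => colCount τ l' - (fun _ => 0) l' - (if l' = l then 1 else 0))
      = fun l' => colCount τ l' - (if l' = l then 1 else 0) := by
    funext l'; simp
  rw [e1, e2, eTildeC_full G τ hrk hmd, eTildeC_erase G τ hrk hmd hl, Nat.sub_zero]
  push_cast
  ring

lemma aCN_t1 (hrk : G.rank = h) (hmd : HasMinDistGE2 G) {l m : Fin n}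
    (hl : 0 < colCount τ l) (hm : 0 < colCount τ m) (hml : m = l → 2 ≤ colCount τ l) :
    aCN G τ l (fun l' => if l' = m then 1 else 0) = (xi2 G τ l m : ℝ) := by
  rw [aCN]
  by_cases hme : m = l
  · subst hme
    have e1 : (fun l' => colCount τ l' - (fun l'' => if l'' = m then 1 else 0) l')
        = fun l' => colCount τ l' - (if l' = m then 1 else 0) := rfl
    have e2 : (fun l' => colCount τ l' - (fun l'' => if l'' = m then 1 else 0) l'
          - (if l' = m then 1 else 0))
        = fun l' => colCount τ l' - (if l' = m then 1 else 0) - (if l' = m then 1 else 0) := rfl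
    rw [e1, e2, eTildeC_erase G τ hrk hmd hm]
    have key := eTildeC_pair_eq G τ hrk hmd (hml rfl)
    have hcast : 2 * (eTildeC G τ (fun l' => colCount τ l' - (if l' = m then 1 else 0)
        - (if l' = m then 1 else 0)) : ℝ) + (xi2 G τ m m : ℝ)
        = (colCount τ m : ℝ) * ((colCount τ m : ℝ) - 1) * h := by
      have hc := congrArg (fun k : ℕ => (k : ℝ)) key
      push_cast [Nat.cast_sub (show 1 ≤ colCount τ m by omega)] at hc
      linarith [hc]
    simp only [if_pos rfl, if_true]
    rw [Nat.cast_sub (show 1 ≤ colCount τ m by omega)]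
    push_cast
    linear_combination -hcast
  · have hlm : l ≠ m := Ne.symm hme
    have htl : (if l = m then (1:ℕ) else 0) = 0 := by simp [hlm]
    have e1 : (fun l' => colCount τ l' - (fun l'' => if l'' = m then 1 else 0) l')
        = fun l' => colCount τ l' - (if l' = m then 1 else 0) := rfl
    have e2 : (fun l' => colCount τ l' - (fun l'' => if l'' = m then 1 else 0) l'
          - (if l' = l then 1 else 0))
        = fun l' => colCount τ l' - (if l' = m then 1 else 0) - (if l' = l then 1 else 0) := rfl
    rw [e1, e2, eTildeC_erase G τ hrk hmd hm]
    have key := eTildeC_pair_ne G τ hrk hmd hme hm hl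
    have hcast : (eTildeC G τ (fun l' => colCount τ l' - (if l' = m then 1 else 0)
        - (if l' = l then 1 else 0)) : ℝ) + (xi2 G τ l m : ℝ)
        = (colCount τ m : ℝ) * (colCount τ l : ℝ) * h := by
      have := congrArg (fun k : ℕ => (k : ℝ)) key
      push_cast at this
      exact this
    simp only [htl, if_neg hlm, Nat.sub_zero]
    push_cast
    linear_combination -hcast

lemma xi2_zero_of_no_m {l m : Fin n} (hm : colCount τ m = 0) : xi2 G τ l m = 0 := by
  rw [xi2, Finset.card_eq_zero]
  rw [Finset.eq_empty_iff_forall_notMem]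
  intro p hp
  simp only [Finset.mem_filter, Finset.mem_univ, true_and] at hp
  have : p.2 ∈ Finset.univ.filter fun j => τ j = m := by
    simp [hp.2.2.1]
  have h0 : (Finset.univ.filter fun j => τ j = m).card = 0 := hm
  rw [Finset.card_eq_zero] at h0
  rw [h0] at this
  exact absurd this (Finset.notMem_empty _)

lemma xi2_zero_of_one {l : Fin n} (hl : colCount τ l ≤ 1) : xi2 G τ l l = 0 := by
  rw [xi2, Finset.card_eq_zero, Finset.eq_empty_iff_forall_notMem]
  intro p hp
  simp only [Finset.mem_filter, Finset.mem_univ, true_and] at hp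
  have hsub : ({p.1, p.2} : Finset (Fin s)) ⊆ Finset.univ.filter fun j => τ j = l := by
    intro x hx
    rcases Finset.mem_insert.mp hx with hx | hx
    · subst hx; simp [hp.2.1]
    · rw [Finset.mem_singleton] at hx; subst hx; simp [hp.2.2.1]
  have := Finset.card_le_card hsub
  rw [Finset.card_pair hp.1] at this
  have : (2 : ℕ) ≤ 1 := this.trans hl
  omega

lemma hWeight_wt2vec {i j : Fin s} (hij : i ≠ j) : hWeight (wt2vec i j) = 2 := by
  rw [hWeight]
  have : (Finset.univ.filter fun r => wt2vec i j r ≠ 0) = {i, j} := by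
    ext r
    simp only [Finset.mem_filter, Finset.mem_univ, true_and, Finset.mem_insert,
      Finset.mem_singleton, wt2vec]
    by_cases hr : r = i ∨ r = j <;> simp [hr] <;> tauto
  rw [this, Finset.card_pair hij]

lemma xi2_zero_of_not_eq2 (hmd : HasMinDistGE2 G) (hne : ¬ HasMinDistEq2 G) {l m : Fin n} :
    xi2 G τ l m = 0 := by
  rw [xi2, Finset.card_eq_zero, Finset.eq_empty_iff_forall_notMem]
  intro p hp
  simp only [Finset.mem_filter, Finset.mem_univ, true_and] at hp
  obtain ⟨hpne, _, _, x, hx⟩ := hp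
  exact hne ⟨hmd, x, by rw [hx]; exact hWeight_wt2vec hpne⟩

lemma hasDerivAt_onemx_pow (a b : ℕ) :
    HasDerivAt (fun x : ℝ => (1 - x) ^ a * x ^ b)
      ((if a = 1 then (-1 : ℝ) else 0) + (if a = 0 then (b : ℝ) else 0)) 1 := by
  have h1 : HasDerivAt (fun x : ℝ => 1 - x) (-1) 1 := by
    simpa using (hasDerivAt_id (1 : ℝ)).const_sub 1
  have h2 := h1.fun_pow a
  have h3 := hasDerivAt_pow b (1 : ℝ)
  have h4 := h2.fun_mul h3
  refine h4.congr_deriv (Eq.symm ?_)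
  rcases a with _ | _ | a
  · norm_num
  · norm_num
  · have : ((1 : ℝ) - 1) ^ (a + 2) = 0 := by norm_num
    have h5 : ((1 : ℝ) - 1) ^ (a + 2 - 1) = 0 := by norm_num
    simp only [this, h5]
    norm_num

end METAux

namespace METAux
open MET Finset

variable {n h s : ℕ} (G : Matrix (Fin h) (Fin s) (ZMod 2)) (τ : Fin s → Fin n)

lemma hasDerivAt_IEC (hrk : G.rank = h) (hmd : HasMinDistGE2 G) {l m : Fin n}
    (hl : 0 < colCount τ l) :
    HasDerivAt (fun x : ℝ => IEC G τ l (Function.update (fun _ => (1 : ℝ)) m x))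
      ((xi2 G τ l m : ℝ) / (colCount τ l : ℝ)) 1 := by
  classical
  set β : (Fin n → ℕ) → ℕ := fun t => colCount τ m - t m - (if m = l then 1 else 0) with hβ
  set Cf : (Fin n → ℕ) → ℝ := fun t => ∏ l' ∈ Finset.univ.erase m, (0 : ℝ) ^ (t l') with hCf
  have hfun : ∀ x : ℝ, IEC G τ l (Function.update (fun _ => (1 : ℝ)) m x)
      = 1 - (1 / (colCount τ l : ℝ)) * ∑ t ∈ tRange (colCount τ) l,
          (Cf t * aCN G τ l t) * ((1 - x) ^ (t m) * x ^ (β t)) := by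
    intro x
    rw [IEC]
    congr 1
    congr 1
    apply Finset.sum_congr rfl
    intro t _
    have hprod : (∏ l', (1 - Function.update (fun _ => (1:ℝ)) m x l') ^ (t l')
          * (Function.update (fun _ => (1:ℝ)) m x l')
            ^ (colCount τ l' - t l' - (if l' = l then 1 else 0)))
        = ((1 - x) ^ (t m) * x ^ (β t)) * Cf t := by
      rw [← Finset.mul_prod_erase Finset.univ _ (Finset.mem_univ m)]
      congr 1
      · rw [Function.update_self, hβ]
      · rw [hCf]
        apply Finset.prod_congr rfl
        intro l' hl'
        have hne : l' ≠ m := (Finset.mem_erase.mp hl').1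
        rw [Function.update_of_ne hne, sub_self, one_pow, mul_one]
    rw [hprod]
    ring
  have hg : HasDerivAt (fun x : ℝ => 1 - (1 / (colCount τ l : ℝ))
      * ∑ t ∈ tRange (colCount τ) l, (Cf t * aCN G τ l t) * ((1 - x) ^ (t m) * x ^ (β t)))
      (-( (1 / (colCount τ l : ℝ)) * ∑ t ∈ tRange (colCount τ) l,
        (Cf t * aCN G τ l t)
          * ((if t m = 1 then (-1:ℝ) else 0) + (if t m = 0 then (β t : ℝ) else 0)))) 1 := by
    apply HasDerivAt.const_sub
    apply HasDerivAt.const_mul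
    apply HasDerivAt.fun_sum
    intro t _
    exact HasDerivAt.const_mul (Cf t * aCN G τ l t) (hasDerivAt_onemx_pow (t m) (β t))
  have hFzero : ∀ t ∈ tRange (colCount τ) l, t ≠ (fun l' => if l' = m then 1 else 0) →
      (Cf t * aCN G τ l t)
        * ((if t m = 1 then (-1:ℝ) else 0) + (if t m = 0 then (β t : ℝ) else 0)) = 0 := by
    intro t _ htne
    by_cases hsupp : ∀ l', l' ≠ m → t l' = 0
    · rcases Nat.lt_or_ge (t m) 2 with h2 | h2
      · rcases (by omega : t m = 0 ∨ t m = 1) with h0 | h1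
        · have ht0 : t = fun _ => 0 := by
            funext l'
            by_cases hlm' : l' = m
            · subst hlm'; exact h0
            · exact hsupp l' hlm'
          rw [ht0, aCN_t0 G τ hrk hmd hl]
          ring
        · exfalso
          apply htne
          funext l'
          by_cases hlm' : l' = m
          · subst hlm'; simpa using h1
          · simp [hlm', hsupp l' hlm']
      · have e1 : (if t m = 1 then (-1:ℝ) else 0) = 0 := if_neg (by omega)
        have e2 : (if t m = 0 then (β t : ℝ) else 0) = 0 := if_neg (by omega)
        rw [e1, e2]
        ring
    · push_neg at hsupp
      obtain ⟨l', hl'm, hl'0⟩ := hsupp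
      have hC0 : Cf t = 0 := by
        rw [hCf]
        exact Finset.prod_eq_zero (Finset.mem_erase.mpr ⟨hl'm, Finset.mem_univ l'⟩)
          (zero_pow hl'0)
      rw [hC0]
      ring
  have hsum : ∑ t ∈ tRange (colCount τ) l, (Cf t * aCN G τ l t)
      * ((if t m = 1 then (-1:ℝ) else 0) + (if t m = 0 then (β t : ℝ) else 0))
      = -(xi2 G τ l m : ℝ) := by
    by_cases hcond : (m = l ∧ 2 ≤ colCount τ l) ∨ (m ≠ l ∧ 0 < colCount τ m)
    · set t1 : Fin n → ℕ := fun l' => if l' = m then 1 else 0 with ht1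
      have ht1mem : t1 ∈ tRange (colCount τ) l := by
        rw [tRange, Fintype.mem_piFinset]
        intro l'
        rw [Finset.mem_range]
        by_cases hlm' : l' = m
        · subst hlm'
          simp only [ht1, if_pos rfl]
          rcases hcond with ⟨he, h2⟩ | ⟨hne, h1⟩
          · rw [if_pos he, he]; omega
          · rw [if_neg hne]; omega
        · simp only [ht1, if_neg hlm']
          by_cases hll : l' = l
          · rw [if_pos hll]; subst hll; omega
          · rw [if_neg hll]; omega
      rw [Finset.sum_eq_single_of_mem t1 ht1mem (fun t ht htne => hFzero t ht htne)]
      have hC1 : Cf t1 = 1 := by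
        rw [hCf]
        apply Finset.prod_eq_one
        intro l' hl'
        have h0 : t1 l' = 0 := if_neg (Finset.mem_erase.mp hl').1
        rw [h0, pow_zero]
      have ht1m : t1 m = 1 := if_pos rfl
      have hmm : 0 < colCount τ m ∧ (m = l → 2 ≤ colCount τ l) := by
        rcases hcond with ⟨he, h2⟩ | ⟨hne, h1⟩
        · exact ⟨by rw [he]; omega, fun _ => h2⟩
        · exact ⟨h1, fun hc => absurd hc hne⟩
      rw [hC1, ht1m]
      rw [show aCN G τ l t1 = (xi2 G τ l m : ℝ) from aCN_t1 G τ hrk hmd hl hmm.1 hmm.2]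
      norm_num
    · have hxi : xi2 G τ l m = 0 := by
        by_cases hme : m = l
        · rw [hme]
          apply xi2_zero_of_one G τ
          by_contra hcc
          exact hcond (Or.inl ⟨hme, by omega⟩)
        · apply xi2_zero_of_no_m G τ
          by_contra hcc
          exact hcond (Or.inr ⟨hme, by omega⟩)
      rw [hxi]
      norm_num
      apply Finset.sum_eq_zero
      intro t ht
      by_cases htne : t = fun l' => if l' = m then 1 else 0
      · exfalso
        rw [tRange, Fintype.mem_piFinset] at ht
        have hb := ht m
        rw [Finset.mem_range, htne] at hb
        have hb1 : (1 : ℕ) < if m = l then colCount τ m else colCount τ m + 1 := by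
          simpa using hb
        by_cases hme : m = l
        · rw [if_pos hme, hme] at hb1
          exact hcond (Or.inl ⟨hme, by omega⟩)
        · rw [if_neg hme] at hb1
          exact hcond (Or.inr ⟨hme, by omega⟩)
      · exact hFzero t ht htne
  have hfeq : (fun x : ℝ => IEC G τ l (Function.update (fun _ => (1 : ℝ)) m x))
      = fun x : ℝ => 1 - (1 / (colCount τ l : ℝ)) * ∑ t ∈ tRange (colCount τ) l,
          (Cf t * aCN G τ l t) * ((1 - x) ^ (t m) * x ^ (β t)) := funext hfun
  rw [hfeq]
  convert hg using 1
  rw [hsum]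
  field_simp

end METAux


/-- **CN-side derivative identity.** The partial derivative of the aggregate CN EXIT
function `I_{EC,l}` with respect to its `m`-th argument, at the all-ones point,
equals `C^{l,m}`. -/
theorem deriv_IECagg_eq_Cmat {n : ℕ} (hn : 1 ≤ n) (C : CNSide n) (hC : C.Good)
    (l m : Fin n) :
    deriv (fun x : ℝ => IECagg C l (Function.update (fun _ => (1 : ℝ)) m x)) 1
      = Cmat C l m := by
  classical
  have hagg : HasDerivAt (fun x : ℝ => IECagg C l (Function.update (fun _ => (1 : ℝ)) m x))
      (∑ δ ∈ Finset.univ.filter (fun δ => 0 < C.rho δ l),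
        C.rho δ l * ((xi2 (C.cn δ).G (C.cn δ).τ l m : ℝ) / (colCount (C.cn δ).τ l : ℝ))) 1 := by
    have hrfl : (fun x : ℝ => IECagg C l (Function.update (fun _ => (1 : ℝ)) m x))
        = fun x => ∑ δ ∈ Finset.univ.filter (fun δ => 0 < C.rho δ l),
            C.rho δ l * IEC (C.cn δ).G (C.cn δ).τ l (Function.update (fun _ => (1 : ℝ)) m x) :=
      rfl
    rw [hrfl]
    apply HasDerivAt.fun_sum
    intro δ hδ
    simp only [Finset.mem_filter] at hδ
    have hpos : 0 < colCount (C.cn δ).τ l := (C.rho_pos_iff δ l).mp hδ.2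
    exact HasDerivAt.const_mul _
      (METAux.hasDerivAt_IEC (C.cn δ).G (C.cn δ).τ (hC δ).1 (hC δ).2 hpos)
  rw [hagg.deriv, Finset.sum_filter, Cmat]
  simp only [Matrix.of_apply]
  apply Finset.sum_congr rfl
  intro δ _
  by_cases hpos : 0 < C.rho δ l
  · rw [if_pos hpos]
    by_cases heq2 : HasMinDistEq2 (C.cn δ).G
    · rw [if_pos heq2]; ring
    · rw [if_neg heq2, METAux.xi2_zero_of_not_eq2 (C.cn δ).G (C.cn δ).τ (hC δ).2 heq2]
      norm_num
  · have h0 : C.rho δ l = 0 := le_antisymm (not_lt.mp hpos) (C.rho_nonneg δ l)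
    rw [if_neg hpos]
    by_cases heq2 : HasMinDistEq2 (C.cn δ).G
    · rw [if_pos heq2, h0]; norm_num
    · rw [if_neg heq2]
end MET
end
end

section
/- Per-type VN derivative formula: Let γ be a variable-node type whose generator matrix G_γ (of size k_γ × q_γ over GF(2)) has rank k_γ and whose row space has minimum Hamming weight at least 2, with columns typed by E and no punctured bits. Then for every ε ∈ (0,1) and all l,e ∈ E with q_{γ,l} > 0, the partial derivative of I_{EV,l}^{(γ)}(·,ε) with respect to its e-th argument, evaluated at the all-ones point I = (1,…,1), equals (1/q_{γ,l}) Σ_{u=1}^{k_γ} χ_{2,u}^{(γ)}(l,e) ε^u. In particular, it is 0 whenever the local code of γ has minimum distance greater than 2. -/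
open scoped Classical

noncomputable section

namespace MET

section Aux
open Finset Matrix
/-- indicator vector of a finset -/

def indVec {q : ℕ} (B : Finset (Fin q)) : Fin q → ZMod 2 :=
  fun r => if r ∈ B then 1 else 0

lemma zmod2_ne_zero_iff (a : ZMod 2) : a ≠ 0 ↔ a = 1 := by revert a; decide

lemma wt2vec_eq_indVec {q : ℕ} (i j : Fin q) : wt2vec i j = indVec {i, j} := by
  funext r; simp [wt2vec, indVec]

lemma indVec_inj {q : ℕ} {B B' : Finset (Fin q)} (h : indVec B = indVec B') : B = B' := by
  ext r
  have := congrFun h r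
  by_cases hB : r ∈ B <;> by_cases hB' : r ∈ B' <;> simp_all [indVec]

lemma wt2vec_ne_zero {q : ℕ} (i j : Fin q) : wt2vec i j ≠ 0 := by
  intro h
  have := congrFun h i
  simp [wt2vec] at this

lemma wt2vec_comm {q : ℕ} (i j : Fin q) : wt2vec i j = wt2vec j i := by
  funext r; simp [wt2vec, or_comm]

lemma hWeight_le {m : ℕ} (x : Fin m → ZMod 2) : hWeight x ≤ m := by
  simpa [hWeight] using (Finset.card_filter_le Finset.univ fun i => x i ≠ 0)

lemma hWeight_pos {m : ℕ} {x : Fin m → ZMod 2} (hx : x ≠ 0) : 1 ≤ hWeight x := by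
  obtain ⟨i, hi⟩ : ∃ i, x i ≠ 0 := by
    by_contra h; push_neg at h; exact hx (funext fun i => h i)
  have : i ∈ Finset.univ.filter fun i => x i ≠ 0 := by simp [hi]
  exact Finset.card_pos.2 ⟨i, this⟩ 

/-- support of x as the filter where x vanishes has card m - hWeight -/
lemma card_zeroset {m : ℕ} (x : Fin m → ZMod 2) :
    (Finset.univ.filter fun i => x i = 0).card = m - hWeight x := by
  have h := Finset.card_filter_add_card_filter_not (s := (Finset.univ : Finset (Fin m)))
    (p := fun i => x i ≠ 0)
  rw [Finset.card_univ, Fintype.card_fin] at h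
  have h2 : (Finset.univ.filter fun a => ¬ x a ≠ 0) = Finset.univ.filter fun a => x a = 0 := by
    simp
  rw [h2] at h
  unfold hWeight
  omega

lemma vecMul_injective {k q : ℕ} {G : Matrix (Fin k) (Fin q) (ZMod 2)}
    (hrk : G.rank = k) {x : Fin k → ZMod 2} (hx : Matrix.vecMul x G = 0) : x = 0 := by
  have h1 : Gᵀ.rank = k := by rw [Matrix.rank_transpose]; exact hrk
  have h2 := LinearMap.finrank_range_add_finrank_ker (Gᵀ.mulVecLin)
  rw [show Module.finrank (ZMod 2) ↥(LinearMap.range Gᵀ.mulVecLin) = Gᵀ.rank from rfl] at h2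
  simp only [Module.finrank_pi, Fintype.card_fin] at h2
  have h3 : Module.finrank (ZMod 2) ↥(LinearMap.ker Gᵀ.mulVecLin) = 0 := by omega
  have h4 : LinearMap.ker Gᵀ.mulVecLin = ⊥ := Submodule.finrank_eq_zero.1 h3
  have h5 : x ∈ LinearMap.ker Gᵀ.mulVecLin := by
    simp only [LinearMap.mem_ker, Matrix.mulVecLin_apply, Matrix.mulVec_transpose]
    exact hx
  rw [h4] at h5; simpa using h5

lemma vecMul_unique {k q : ℕ} {G : Matrix (Fin k) (Fin q) (ZMod 2)}
    (hrk : G.rank = k) {x y : Fin k → ZMod 2}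
    (h : Matrix.vecMul x G = Matrix.vecMul y G) : x = y := by
  have : Matrix.vecMul (x - y) G = 0 := by rw [Matrix.sub_vecMul, h, sub_self]
  have := vecMul_injective hrk this
  have := sub_eq_zero.1 this; exact this

/-- dichotomy for codewords supported in a 2-element set -/
lemma codeword_pair {k q : ℕ} {G : Matrix (Fin k) (Fin q) (ZMod 2)}
    (hmd : HasMinDistGE2 G) (x : Fin k → ZMod 2) (i j : Fin q)
    (h : ∀ r, r ≠ i → r ≠ j → Matrix.vecMul x G r = 0) :
    Matrix.vecMul x G = 0 ∨ (i ≠ j ∧ Matrix.vecMul x G = wt2vec i j) := by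
  set c := Matrix.vecMul x G with hc
  by_cases hc0 : c = 0
  · exact Or.inl hc0
  · right
    have hw : 2 ≤ hWeight c := hmd x hc0
    have hsub : (Finset.univ.filter fun r => c r ≠ 0) ⊆ {i, j} := by
      intro r hr
      simp only [Finset.mem_filter] at hr
      by_contra hrij
      simp only [Finset.mem_insert, Finset.mem_singleton] at hrij
      push_neg at hrij
      exact hr.2 (h r hrij.1 hrij.2)
    have hcard : ({i, j} : Finset (Fin q)).card ≤ (Finset.univ.filter fun r => c r ≠ 0).card := by
      calc ({i, j} : Finset (Fin q)).card ≤ 2 := Finset.card_insert_le _ _ |>.trans (by simp)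
        _ ≤ _ := hw
    have heq : (Finset.univ.filter fun r => c r ≠ 0) = {i, j} :=
      Finset.eq_of_subset_of_card_le hsub hcard
    have hij : i ≠ j := by
      intro hij; rw [hij] at heq
      have : hWeight c ≤ 1 := by
        rw [hWeight, heq]; simp
      omega
    refine ⟨hij, funext fun r => ?_⟩
    by_cases hr : r = i ∨ r = j
    · have : r ∈ Finset.univ.filter fun r => c r ≠ 0 := by
        rw [heq]; simp only [Finset.mem_insert, Finset.mem_singleton]; exact hr
      simp only [Finset.mem_filter] at this
      have := (zmod2_ne_zero_iff _).1 this.2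
      simp [wt2vec, hr, this]
    · have : r ∉ Finset.univ.filter fun r => c r ≠ 0 := by
        rw [heq]; simpa using hr
      simp only [Finset.mem_filter, Finset.mem_univ, true_and, not_not] at this
      simp [wt2vec, hr, this]

lemma hWeight_wt2vec {q : ℕ} {i j : Fin q} (hij : i ≠ j) : hWeight (wt2vec i j) = 2 := by
  have : (Finset.univ.filter fun r => wt2vec i j r ≠ 0) = {i, j} := by
    ext r
    by_cases hr : r = i ∨ r = j
    · simp only [Finset.mem_filter, Finset.mem_univ, true_and, Finset.mem_insert,
        Finset.mem_singleton]
      simp [wt2vec, hr]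
    · push_neg at hr
      simp only [Finset.mem_filter, Finset.mem_univ, true_and, Finset.mem_insert,
        Finset.mem_singleton]
      simp [wt2vec, hr.1, hr.2]
  rw [hWeight, this, Finset.card_insert_of_notMem (by simpa using hij), Finset.card_singleton]



def Mc {k q : ℕ} (G : Matrix (Fin k) (Fin q) (ZMod 2))
    (A : Finset (Fin q)) (T : Finset (Fin k)) :
    Matrix (Fin k) ({x // x ∈ A} ⊕ {x // x ∈ T}) (ZMod 2) :=
  Matrix.of fun i j =>
    Sum.elim (fun a => G i a.1) (fun t => if i = t.1 then (1 : ZMod 2) else 0) j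

lemma colRank_eq_Mc {k q : ℕ} (G : Matrix (Fin k) (Fin q) (ZMod 2)) (A T) :
    colRank G A T = (Mc G A T).rank := rfl

lemma colRank_add_ker {k q : ℕ} (G : Matrix (Fin k) (Fin q) (ZMod 2)) (A T) :
    colRank G A T
      + Module.finrank (ZMod 2) ↥(LinearMap.ker (Mc G A T)ᵀ.mulVecLin) = k := by
  have h2 := LinearMap.finrank_range_add_finrank_ker ((Mc G A T)ᵀ.mulVecLin)
  rw [show Module.finrank (ZMod 2) ↥(LinearMap.range (Mc G A T)ᵀ.mulVecLin)
      = (Mc G A T)ᵀ.rank from rfl] at h2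
  rw [Matrix.rank_transpose] at h2
  simpa [colRank_eq_Mc, Module.finrank_pi] using h2

lemma mem_ker_Mc {k q : ℕ} {G : Matrix (Fin k) (Fin q) (ZMod 2)} {A T}
    {x : Fin k → ZMod 2} :
    x ∈ LinearMap.ker (Mc G A T)ᵀ.mulVecLin
      ↔ (∀ a ∈ A, Matrix.vecMul x G a = 0) ∧ (∀ t ∈ T, x t = 0) := by
  rw [LinearMap.mem_ker, Matrix.mulVecLin_apply, Matrix.mulVec_transpose]
  constructor
  · intro h
    constructor
    · intro a ha
      have := congrFun h (Sum.inl ⟨a, ha⟩)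
      simpa [Matrix.vecMul, dotProduct, Mc, Matrix.vecMul] using this
    · intro t ht
      have := congrFun h (Sum.inr ⟨t, ht⟩)
      simpa [Matrix.vecMul, dotProduct, Mc, mul_ite] using this
  · intro ⟨h1, h2⟩
    funext j
    rcases j with a | t
    · have := h1 a.1 a.2
      simpa [Matrix.vecMul, dotProduct, Mc] using this
    · have := h2 t.1 t.2
      simpa [Matrix.vecMul, dotProduct, Mc, mul_ite] using this

lemma colRank_of_small_compl {k q : ℕ} {G : Matrix (Fin k) (Fin q) (ZMod 2)}
    (hrk : G.rank = k) (hmd : HasMinDistGE2 G) {A : Finset (Fin q)}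
    (hA : Aᶜ.card ≤ 1) (T : Finset (Fin k)) : colRank G A T = k := by
  have hker : LinearMap.ker (Mc G A T)ᵀ.mulVecLin = ⊥ := by
    rw [eq_bot_iff]
    intro x hx
    rw [mem_ker_Mc] at hx
    have hsub : (Finset.univ.filter fun r => Matrix.vecMul x G r ≠ 0) ⊆ Aᶜ := by
      intro r hr
      simp only [Finset.mem_filter] at hr
      rw [Finset.mem_compl]
      intro hrA
      exact hr.2 (hx.1 r hrA)
    have hxg : Matrix.vecMul x G = 0 := by
      by_contra h0
      have := hmd x h0
      have := (Finset.card_le_card hsub).trans hA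
      unfold hWeight at *
      omega
    have := vecMul_injective hrk hxg
    simpa using this
  have := colRank_add_ker G A T
  rw [hker] at this
  simpa using this

lemma colRank_pair {k q : ℕ} {G : Matrix (Fin k) (Fin q) (ZMod 2)}
    (hrk : G.rank = k) (hmd : HasMinDistGE2 G) {A : Finset (Fin q)} {i j : Fin q}
    (hij : i ≠ j) (hA : Aᶜ = {i, j}) (T : Finset (Fin k)) :
    colRank G A T
      + (Finset.univ.filter fun x : Fin k → ZMod 2 =>
          Matrix.vecMul x G = wt2vec i j ∧ ∀ t ∈ T, x t = 0).card = k := by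
  set s := Finset.univ.filter fun x : Fin k → ZMod 2 =>
      Matrix.vecMul x G = wt2vec i j ∧ ∀ t ∈ T, x t = 0 with hs
  have hmemA : ∀ a ∈ A, a ≠ i ∧ a ≠ j := by
    intro a ha
    have : a ∉ Aᶜ := by simp [ha]
    rw [hA] at this
    simp only [Finset.mem_insert, Finset.mem_singleton] at this
    push_neg at this; exact this
  have key : ∀ x : Fin k → ZMod 2, x ∈ LinearMap.ker (Mc G A T)ᵀ.mulVecLin →
      x = 0 ∨ x ∈ s := by
    intro x hx
    rw [mem_ker_Mc] at hx
    have hvan : ∀ r, r ≠ i → r ≠ j → Matrix.vecMul x G r = 0 := by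
      intro r hri hrj
      apply hx.1
      by_contra hrA
      have : r ∈ Aᶜ := Finset.mem_compl.2 hrA
      rw [hA] at this
      simp only [Finset.mem_insert, Finset.mem_singleton] at this
      rcases this with h | h
      · exact hri h
      · exact hrj h
    rcases codeword_pair hmd x i j hvan with h0 | ⟨_, h2⟩
    · exact Or.inl (vecMul_injective hrk h0)
    · exact Or.inr (Finset.mem_filter.2 ⟨Finset.mem_univ _, h2, hx.2⟩)
  rcases Finset.eq_empty_or_nonempty s with hse | ⟨x0, hx0⟩
  · have hker : LinearMap.ker (Mc G A T)ᵀ.mulVecLin = ⊥ := by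
      rw [eq_bot_iff]
      intro x hx
      rcases key x hx with h | h
      · simpa using h
      · rw [hse] at h; simp at h
    have := colRank_add_ker G A T
    rw [hker] at this
    rw [hse]
    simpa using this
  · have hx0' : Matrix.vecMul x0 G = wt2vec i j ∧ ∀ t ∈ T, x0 t = 0 := by
      simpa [hs] using hx0
    have hx0ne : x0 ≠ 0 := by
      intro h; rw [h] at hx0'
      exact wt2vec_ne_zero i j (by simpa using hx0'.1.symm)
    have hcard : s.card = 1 := by
      rw [Finset.card_eq_one]
      refine ⟨x0, Finset.eq_singleton_iff_unique_mem.2 ⟨hx0, fun y hy => ?_⟩⟩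
      have hy' : Matrix.vecMul y G = wt2vec i j ∧ ∀ t ∈ T, y t = 0 := by simpa [hs] using hy
      exact vecMul_unique hrk (hy'.1.trans hx0'.1.symm)
    have hker : LinearMap.ker (Mc G A T)ᵀ.mulVecLin = Submodule.span (ZMod 2) {x0} := by
      apply le_antisymm
      · intro y hy
        rcases key y hy with h | h
        · simp [h]
        · have hy' : Matrix.vecMul y G = wt2vec i j ∧ ∀ t ∈ T, y t = 0 := by simpa [hs] using h
          have : y = x0 := vecMul_unique hrk (hy'.1.trans hx0'.1.symm)
          rw [this]
          exact Submodule.mem_span_singleton_self x0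
      · rw [Submodule.span_singleton_le_iff_mem]
        rw [mem_ker_Mc]
        refine ⟨fun a ha => ?_, hx0'.2⟩
        rw [hx0'.1]
        have := hmemA a ha
        simp [wt2vec, this.1, this.2]
    have := colRank_add_ker G A T
    rw [hker, finrank_span_singleton hx0ne] at this
    rw [hcard]
    exact this

lemma card_Tfilter (k u : ℕ) :
    (Finset.univ.filter fun T : Finset (Fin k) => T.card = u).card = k.choose u := by
  rw [← Finset.powerset_univ, ← Finset.powersetCard_eq_filter, Finset.card_powersetCard,
    Finset.card_univ, Fintype.card_fin]

lemma sum_colRank_small {k q : ℕ} {G : Matrix (Fin k) (Fin q) (ZMod 2)}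
    (hrk : G.rank = k) (hmd : HasMinDistGE2 G) {A : Finset (Fin q)}
    (hA : Aᶜ.card ≤ 1) (u : ℕ) :
    ∑ T ∈ Finset.univ.filter (fun T : Finset (Fin k) => T.card = u), colRank G A T
      = k.choose u * k := by
  rw [Finset.sum_congr rfl fun T _ => colRank_of_small_compl hrk hmd hA T,
    Finset.sum_const, card_Tfilter, smul_eq_mul]

lemma count_T_avoiding {k u : ℕ} (x : Fin k → ZMod 2) :
    ((Finset.univ.filter fun T : Finset (Fin k) => T.card = u).filter
        fun T => ∀ t ∈ T, x t = 0).card = (k - hWeight x).choose u := by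
  have : ((Finset.univ.filter fun T : Finset (Fin k) => T.card = u).filter
        fun T => ∀ t ∈ T, x t = 0)
      = Finset.powersetCard u (Finset.univ.filter fun t => x t = 0) := by
    ext T
    rw [Finset.mem_powersetCard]
    simp only [Finset.mem_filter, Finset.mem_univ, true_and]
    constructor
    · rintro ⟨h1, h2⟩
      exact ⟨fun t ht => by simp [h2 t ht], h1⟩
    · rintro ⟨h1, h2⟩
      refine ⟨h2, fun t ht => ?_⟩
      have := h1 ht
      simpa using this
  rw [this, Finset.card_powersetCard, card_zeroset]

lemma sum_colRank_pair {k q : ℕ} {G : Matrix (Fin k) (Fin q) (ZMod 2)}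
    (hrk : G.rank = k) (hmd : HasMinDistGE2 G) {A : Finset (Fin q)} {i j : Fin q}
    (hij : i ≠ j) (hA : Aᶜ = {i, j}) (u : ℕ) :
    ∑ T ∈ Finset.univ.filter (fun T : Finset (Fin k) => T.card = u), colRank G A T
      + ∑ x : Fin k → ZMod 2,
          (if Matrix.vecMul x G = wt2vec i j then (k - hWeight x).choose u else 0)
      = k.choose u * k := by
  set TS := Finset.univ.filter fun T : Finset (Fin k) => T.card = u with hTS
  have step1 : ∑ T ∈ TS, (colRank G A T
      + (Finset.univ.filter fun x : Fin k → ZMod 2 =>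
          Matrix.vecMul x G = wt2vec i j ∧ ∀ t ∈ T, x t = 0).card) = k.choose u * k := by
    rw [Finset.sum_congr rfl fun T _ => colRank_pair hrk hmd hij hA T,
      Finset.sum_const, card_Tfilter, smul_eq_mul]
  rw [Finset.sum_add_distrib] at step1
  rw [← step1]
  congr 1
  -- swap the double sum
  have : ∀ T : Finset (Fin k), (Finset.univ.filter fun x : Fin k → ZMod 2 =>
          Matrix.vecMul x G = wt2vec i j ∧ ∀ t ∈ T, x t = 0).card
      = ∑ x : Fin k → ZMod 2,
          (if Matrix.vecMul x G = wt2vec i j ∧ ∀ t ∈ T, x t = 0 then 1 else 0) := by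
    intro T
    rw [Finset.card_filter]
  rw [Finset.sum_congr rfl fun T _ => this T, Finset.sum_comm]
  apply Finset.sum_congr rfl
  intro x _
  by_cases hx : Matrix.vecMul x G = wt2vec i j
  · simp only [hx, true_and, if_true]
    rw [← count_T_avoiding (u := u) x, Finset.card_filter]
  · simp [hx]

section AuxTypes
variable {n q : ℕ} (τ : Fin q → Fin n)


lemma filter_split (A : Finset (Fin q)) (P : Fin q → Prop) [DecidablePred P] :
    (A.filter P).card + (Aᶜ.filter P).card = (Finset.univ.filter P).card := by
  rw [← Finset.card_union_of_disjoint, ← Finset.filter_union, Finset.union_compl]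
  exact Finset.disjoint_filter_filter disjoint_compl_right

lemma counts_iff (d : Fin n → ℕ) (hd : ∀ m, d m ≤ colCount τ m) (A : Finset (Fin q)) :
    (∀ m, (A.filter fun j => τ j = m).card = colCount τ m - d m)
      ↔ (∀ m, (Aᶜ.filter fun j => τ j = m).card = d m) := by
  constructor <;> intro h m <;>
  · have h1 : (A.filter fun j => τ j = m).card + (Aᶜ.filter fun j => τ j = m).card
        = colCount τ m := filter_split A _
    have h2 := h m
    have h3 := hd m
    omega

lemma card_via_types (B : Finset (Fin q)) :
    B.card = ∑ m, (B.filter fun j => τ j = m).card :=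
  Finset.card_eq_sum_card_fiberwise (fun x _ => Finset.mem_univ (τ x))

lemma pair_filter_card {i j : Fin q} (hij : i ≠ j) (P : Fin q → Prop) [DecidablePred P] :
    (({i, j} : Finset (Fin q)).filter P).card
      = (if P i then 1 else 0) + (if P j then 1 else 0) := by
  rw [show ({i, j} : Finset (Fin q)) = insert i {j} from rfl, Finset.filter_insert,
    Finset.filter_singleton]
  by_cases hPi : P i <;> by_cases hPj : P j <;>
    simp [hPi, hPj, Finset.card_insert_of_notMem, hij]

lemma C0 (A : Finset (Fin q)) :
    (∀ m, (Aᶜ.filter fun j => τ j = m).card = 0) ↔ A = Finset.univ := by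
  constructor
  · intro h
    have : Aᶜ.card = 0 := by rw [card_via_types τ Aᶜ]; simp [h]
    have : Aᶜ = ∅ := Finset.card_eq_zero.1 this
    rwa [Finset.compl_eq_empty_iff] at this
  · intro h m
    simp [h]

lemma C1 (e : Fin n) (A : Finset (Fin q)) :
    (∀ m, (Aᶜ.filter fun j => τ j = m).card = if m = e then 1 else 0)
      ↔ ∃ jj, τ jj = e ∧ Aᶜ = {jj} := by
  constructor
  · intro h
    have hcard : Aᶜ.card = 1 := by
      rw [card_via_types τ Aᶜ]
      rw [Finset.sum_congr rfl fun m _ => h m]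
      simp
    obtain ⟨jj, hjj⟩ := Finset.card_eq_one.1 hcard
    refine ⟨jj, ?_, hjj⟩
    have := h (τ jj)
    rw [hjj] at this
    simp only [Finset.filter_singleton, if_pos rfl] at this
    by_contra hne
    rw [if_neg hne] at this
    simp at this
  · rintro ⟨jj, hjj, hA⟩ m
    rw [hA, Finset.filter_singleton]
    by_cases h : τ jj = m <;> by_cases h2 : m = e <;> simp_all

lemma C23 (e l : Fin n) (A : Finset (Fin q)) :
    (∀ m, (Aᶜ.filter fun j => τ j = m).card
        = (if m = e then 1 else 0) + (if m = l then 1 else 0))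
      ↔ ∃ i j, i ≠ j ∧ τ i = e ∧ τ j = l ∧ Aᶜ = {i, j} := by
  constructor
  · intro h
    have hcard : Aᶜ.card = 2 := by
      rw [card_via_types τ Aᶜ, Finset.sum_congr rfl fun m _ => h m, Finset.sum_add_distrib]
      simp
    obtain ⟨x, y, hxy, hA⟩ := Finset.card_eq_two.1 hcard
    have hm : ∀ m, (if τ x = m then 1 else 0) + (if τ y = m then 1 else 0)
        = (if m = e then 1 else 0) + (if m = l then 1 else 0) := by
      intro m
      have := h m
      rw [hA, pair_filter_card hxy] at this
      exact this
    by_cases hxe : τ x = e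
    · refine ⟨x, y, hxy, hxe, ?_, hA⟩
      have := hm l
      by_cases hle : l = e
      · subst hle
        have h2 := hm l
        simp only [if_pos rfl] at h2
        by_contra hyl
        rw [if_neg hyl, if_pos hxe] at h2
        simp at h2
      · by_contra hyl
        rw [if_neg hyl, if_pos rfl, if_neg hle] at this
        have hxl : τ x ≠ l := by rw [hxe]; exact fun hh => hle hh.symm
        rw [if_neg hxl] at this
        simp at this
    · -- then τ y = e and τ x = l
      have hye : τ y = e := by
        have := hm e
        rw [if_neg hxe, if_pos rfl] at this
        by_contra hye
        rw [if_neg hye] at this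
        by_cases hel : e = l
        · omega
        · rw [if_neg hel] at this; omega
      have hxl : τ x = l := by
        have := hm (τ x)
        rw [if_pos rfl] at this
        by_cases hte : τ x = e
        · exact absurd hte hxe
        · rw [if_neg hte] at this
          by_contra hxl
          rw [if_neg hxl] at this
          by_cases hty : τ y = τ x
          · rw [if_pos hty] at this; omega
          · rw [if_neg hty] at this; omega
      refine ⟨y, x, hxy.symm, hye, hxl, ?_⟩
      rw [hA]
      exact Finset.pair_comm x y
  · rintro ⟨i, j, hij, hie, hjl, hA⟩ m
    rw [hA, pair_filter_card hij, hie, hjl]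
    congr 1 <;> simp [eq_comm]


end AuxTypes


section ET
variable {n k q : ℕ} {G : Matrix (Fin k) (Fin q) (ZMod 2)} {τ : Fin q → Fin n}

/-- The set of ordered pairs of distinct columns of types `e, l`. -/
def PairSet {n q : ℕ} (τ : Fin q → Fin n) (e l : Fin n) : Finset (Fin q × Fin q) :=
  Finset.univ.filter fun p : Fin q × Fin q => p.1 ≠ p.2 ∧ τ p.1 = e ∧ τ p.2 = l

/-- Number of ordered typed pairs supporting `x ᵥ* G` as a weight-2 vector. -/
def Ncw {n k q : ℕ} (G : Matrix (Fin k) (Fin q) (ZMod 2)) (τ : Fin q → Fin n)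
    (e l : Fin n) (x : Fin k → ZMod 2) : ℕ :=
  (Finset.univ.filter fun p : Fin q × Fin q =>
    p.1 ≠ p.2 ∧ τ p.1 = e ∧ τ p.2 = l ∧ Matrix.vecMul x G = wt2vec p.1 p.2).card

lemma compl_inj' {A B : Finset (Fin q)} (h : Aᶜ = Bᶜ) : A = B := by
  have := congrArg (·ᶜ) h
  simpa using this

lemma pair_eq_cases {a b c d : Fin q} (hab : a ≠ b) (h : ({a, b} : Finset (Fin q)) = {c, d}) :
    (a = c ∧ b = d) ∨ (a = d ∧ b = c) := by
  have ha : a ∈ ({c, d} : Finset (Fin q)) := h ▸ (by simp)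
  have hb : b ∈ ({c, d} : Finset (Fin q)) := h ▸ (by simp)
  have hc : c ∈ ({a, b} : Finset (Fin q)) := h ▸ (by simp)
  have hd : d ∈ ({a, b} : Finset (Fin q)) := h ▸ (by simp)
  simp only [Finset.mem_insert, Finset.mem_singleton] at ha hb hc hd
  rcases ha with h1 | h1 <;> rcases hb with h2 | h2
  · exact absurd (h1.trans h2.symm) hab
  · exact Or.inl ⟨h1, h2⟩
  · exact Or.inr ⟨h1, h2⟩
  · exact absurd (h1.trans h2.symm) hab

lemma E1 (hrk : G.rank = k) (hmd : HasMinDistGE2 G) {g : Fin n → ℕ}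
    (hg : ∀ m, g m = colCount τ m) (u : ℕ) :
    eTilde G τ g u = k.choose u * k := by
  have hset : (Finset.univ.filter (fun A : Finset (Fin q) =>
      ∀ l, (A.filter fun j => τ j = l).card = g l)) = {Finset.univ} := by
    ext A
    simp only [Finset.mem_filter, Finset.mem_univ, true_and, Finset.mem_singleton]
    constructor
    · intro h
      apply (C0 τ A).1
      apply (counts_iff τ (fun _ => 0) (fun m => Nat.zero_le _) A).1
      intro m; rw [h m, hg m]; omega
    · intro h
      subst h
      intro m
      rw [hg m]
      rfl
  rw [eTilde, hset, Finset.sum_singleton]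
  exact sum_colRank_small hrk hmd (by simp) u

lemma E2 (hrk : G.rank = k) (hmd : HasMinDistGE2 G) {e : Fin n}
    (hqe : 1 ≤ colCount τ e) {g : Fin n → ℕ}
    (hg : ∀ m, g m = colCount τ m - (if m = e then 1 else 0)) (u : ℕ) :
    eTilde G τ g u = colCount τ e * (k.choose u * k) := by
  have hd : ∀ m, (if m = e then 1 else 0) ≤ colCount τ m := by
    intro m; by_cases h : m = e <;> simp [h, hqe]
  have hmem : ∀ A : Finset (Fin q),
      (∀ m, (A.filter fun j => τ j = m).card = g m) ↔ ∃ jj, τ jj = e ∧ Aᶜ = {jj} := by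
    intro A
    rw [← C1 τ e A, ← counts_iff τ _ hd A]
    constructor <;> intro h m <;> [rw [← hg m]; rw [hg m]] <;> exact h m
  have hval : ∀ A ∈ (Finset.univ.filter (fun A : Finset (Fin q) =>
      ∀ l, (A.filter fun j => τ j = l).card = g l)),
      (∑ T ∈ Finset.univ.filter (fun T : Finset (Fin k) => T.card = u), colRank G A T)
        = k.choose u * k := by
    intro A hA
    simp only [Finset.mem_filter, Finset.mem_univ, true_and] at hA
    obtain ⟨jj, _, hAc⟩ := (hmem A).1 hA
    exact sum_colRank_small hrk hmd (by rw [hAc]; simp) u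
  rw [eTilde, Finset.sum_congr rfl hval, Finset.sum_const, smul_eq_mul]
  congr 1
  have himg : (Finset.univ.filter (fun A : Finset (Fin q) =>
      ∀ l, (A.filter fun j => τ j = l).card = g l))
      = (Finset.univ.filter fun jj => τ jj = e).image (fun jj => ({jj}ᶜ : Finset (Fin q))) := by
    ext A
    simp only [Finset.mem_filter, Finset.mem_univ, true_and, Finset.mem_image]
    rw [hmem A]
    constructor
    · rintro ⟨jj, hjj, hAc⟩
      exact ⟨jj, hjj, compl_inj' (by simpa using hAc.symm)⟩
    · rintro ⟨jj, hjj, hA⟩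
      exact ⟨jj, hjj, by rw [← hA]; simp⟩
  rw [himg, Finset.card_image_of_injective _ (fun a b hab => by
    have : ({a} : Finset (Fin q)) = {b} := compl_inj' hab
    simpa using this)]
  rfl

lemma SUMPAIR {e l : Fin n} {g : Fin n → ℕ}
    (hd : ∀ m, (if m = e then 1 else 0) + (if m = l then 1 else 0) ≤ colCount τ m)
    (hg : ∀ m, g m = colCount τ m - (if m = e then 1 else 0) - (if m = l then 1 else 0))
    (f : Finset (Fin q) → ℕ) :
    ∑ p ∈ PairSet τ e l, f ({p.1, p.2}ᶜ)
      = (1 + if e = l then 1 else 0) *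
        ∑ A ∈ Finset.univ.filter (fun A : Finset (Fin q) =>
          ∀ l', (A.filter fun j => τ j = l').card = g l'), f A := by
  have hmem : ∀ A : Finset (Fin q),
      (∀ m, (A.filter fun j => τ j = m).card = g m)
        ↔ ∃ i j, i ≠ j ∧ τ i = e ∧ τ j = l ∧ Aᶜ = {i, j} := by
    intro A
    rw [← C23 τ e l A, ← counts_iff τ _ hd A]
    constructor <;> intro h m <;>
      [rw [← Nat.sub_sub, ← hg m]; rw [hg m, Nat.sub_sub]] <;> exact h m
  set S := Finset.univ.filter (fun A : Finset (Fin q) =>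
      ∀ l', (A.filter fun j => τ j = l').card = g l') with hS
  have himg : Finset.image (fun p : Fin q × Fin q => ({p.1, p.2}ᶜ : Finset (Fin q)))
      (PairSet τ e l) = S := by
    ext A
    simp only [Finset.mem_image, hS, Finset.mem_filter, Finset.mem_univ, true_and]
    rw [hmem A]
    constructor
    · rintro ⟨p, hp, hA⟩
      simp only [PairSet, Finset.mem_filter, Finset.mem_univ, true_and] at hp
      exact ⟨p.1, p.2, hp.1, hp.2.1, hp.2.2, by rw [← hA]; simp⟩
    · rintro ⟨i, j, hij, hie, hjl, hAc⟩
      refine ⟨(i, j), ?_, ?_⟩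
      · simp [PairSet, hij, hie, hjl]
      · exact compl_inj' (by simpa using hAc.symm)
  have hfiber : ∀ A ∈ S, ((PairSet τ e l).filter
      (fun p : Fin q × Fin q => ({p.1, p.2}ᶜ : Finset (Fin q)) = A)).card
      = 1 + if e = l then 1 else 0 := by
    intro A hA
    simp only [hS, Finset.mem_filter, Finset.mem_univ, true_and] at hA
    obtain ⟨i0, j0, hij0, hi0, hj0, hAc⟩ := (hmem A).1 hA
    have hkey : ∀ p : Fin q × Fin q, (({p.1, p.2}ᶜ : Finset (Fin q)) = A ↔ ({p.1, p.2} : Finset (Fin q)) = {i0, j0}) := by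
      intro p
      constructor
      · intro h
        rw [← hAc, ← h]; simp
      · intro h
        apply compl_inj'
        simp [h, hAc]
    by_cases hel : e = l
    · have : ((PairSet τ e l).filter
          (fun p : Fin q × Fin q => ({p.1, p.2}ᶜ : Finset (Fin q)) = A))
          = {(i0, j0), (j0, i0)} := by
        ext p
        simp only [Finset.mem_filter, PairSet, Finset.mem_univ, true_and,
          Finset.mem_insert, Finset.mem_singleton]
        rw [hkey p]
        constructor
        · rintro ⟨⟨hne, h1, h2⟩, hpair⟩
          rcases pair_eq_cases hne hpair with ⟨ha, hb⟩ | ⟨ha, hb⟩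
          · exact Or.inl (Prod.ext_iff.2 ⟨ha, hb⟩)
          · exact Or.inr (Prod.ext_iff.2 ⟨ha, hb⟩)
        · rintro (h | h)
          · subst h
            exact ⟨⟨hij0, hi0, hj0⟩, rfl⟩
          · subst h
            refine ⟨⟨hij0.symm, ?_, ?_⟩, Finset.pair_comm _ _⟩
            · rw [hj0, ← hel]
            · rw [hi0, hel]
      rw [this, if_pos hel]
      rw [Finset.card_insert_of_notMem (by simp [Prod.ext_iff]; intro h; exact absurd h hij0),
        Finset.card_singleton]
    · have : ((PairSet τ e l).filter
          (fun p : Fin q × Fin q => ({p.1, p.2}ᶜ : Finset (Fin q)) = A))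
          = {(i0, j0)} := by
        ext p
        simp only [Finset.mem_filter, PairSet, Finset.mem_univ, true_and,
          Finset.mem_singleton]
        rw [hkey p]
        constructor
        · rintro ⟨⟨hne, h1, h2⟩, hpair⟩
          rcases pair_eq_cases hne hpair with ⟨ha, hb⟩ | ⟨ha, hb⟩
          · exact Prod.ext_iff.2 ⟨ha, hb⟩
          · exfalso
            apply hel
            rw [← h1, ha, hj0]
        · rintro h
          subst h
          exact ⟨⟨hij0, hi0, hj0⟩, rfl⟩
      rw [this, if_neg hel, Finset.card_singleton]
  rw [Finset.sum_comp f (fun p : Fin q × Fin q => ({p.1, p.2}ᶜ : Finset (Fin q))), himg,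
    Finset.mul_sum]
  apply Finset.sum_congr rfl
  intro A hA
  rw [hfiber A hA, smul_eq_mul]

lemma E34 (hrk : G.rank = k) (hmd : HasMinDistGE2 G) {e l : Fin n} {g : Fin n → ℕ}
    (hd : ∀ m, (if m = e then 1 else 0) + (if m = l then 1 else 0) ≤ colCount τ m)
    (hg : ∀ m, g m = colCount τ m - (if m = e then 1 else 0) - (if m = l then 1 else 0))
    (u : ℕ) :
    (1 + if e = l then 1 else 0) * eTilde G τ g u
      + ∑ x : Fin k → ZMod 2, Ncw G τ e l x * (k - hWeight x).choose u
      = (PairSet τ e l).card * (k.choose u * k) := by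
  have hmem : ∀ A : Finset (Fin q),
      (∀ m, (A.filter fun j => τ j = m).card = g m)
        ↔ ∃ i j, i ≠ j ∧ τ i = e ∧ τ j = l ∧ Aᶜ = {i, j} := by
    intro A
    rw [← C23 τ e l A, ← counts_iff τ _ hd A]
    constructor <;> intro h m <;>
      [rw [← Nat.sub_sub, ← hg m]; rw [hg m, Nat.sub_sub]] <;> exact h m
  set S := Finset.univ.filter (fun A : Finset (Fin q) =>
      ∀ l', (A.filter fun j => τ j = l').card = g l') with hS
  set corr : Finset (Fin q) → ℕ := fun A => ∑ x : Fin k → ZMod 2,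
      (if Matrix.vecMul x G = indVec Aᶜ then (k - hWeight x).choose u else 0) with hcorr
  have hAval : ∀ A ∈ S,
      (∑ T ∈ Finset.univ.filter (fun T : Finset (Fin k) => T.card = u), colRank G A T)
        + corr A = k.choose u * k := by
    intro A hA
    simp only [hS, Finset.mem_filter, Finset.mem_univ, true_and] at hA
    obtain ⟨i0, j0, hij0, hi0, hj0, hAc⟩ := (hmem A).1 hA
    have := sum_colRank_pair hrk hmd hij0 hAc u
    rw [← this]
    congr 1
    rw [hcorr]
    apply Finset.sum_congr rfl
    intro x _
    rw [hAc, ← wt2vec_eq_indVec]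
  have hsum : eTilde G τ g u + ∑ A ∈ S, corr A = S.card * (k.choose u * k) := by
    rw [eTilde, ← Finset.sum_add_distrib]
    rw [Finset.sum_congr rfl hAval, Finset.sum_const, smul_eq_mul]
  have hcards : ∑ p ∈ PairSet τ e l, (1:ℕ) = (1 + if e = l then 1 else 0) * ∑ A ∈ S, (1:ℕ) :=
    SUMPAIR hd hg (fun _ => 1)
  simp only [Finset.sum_const, smul_eq_mul, mul_one] at hcards
  have hcorrsum : ∑ p ∈ PairSet τ e l, corr ({p.1, p.2}ᶜ)
      = (1 + if e = l then 1 else 0) * ∑ A ∈ S, corr A := SUMPAIR hd hg corr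
  have hcorrpair : ∑ p ∈ PairSet τ e l, corr ({p.1, p.2}ᶜ)
      = ∑ x : Fin k → ZMod 2, Ncw G τ e l x * (k - hWeight x).choose u := by
    rw [hcorr]
    simp only []
    rw [Finset.sum_comm]
    apply Finset.sum_congr rfl
    intro x _
    have : ∀ p ∈ PairSet τ e l,
        (if Matrix.vecMul x G = indVec (({p.1, p.2}ᶜ : Finset (Fin q))ᶜ)
          then (k - hWeight x).choose u else 0)
        = (if Matrix.vecMul x G = wt2vec p.1 p.2 then (k - hWeight x).choose u else 0) := by
      intro p _
      congr 1
      rw [compl_compl, ← wt2vec_eq_indVec]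
    rw [Finset.sum_congr rfl this, ← Finset.sum_filter, Finset.sum_const, smul_eq_mul]
    congr 1
    rw [Ncw, PairSet, Finset.filter_filter]
    apply congrArg Finset.card
    apply Finset.filter_congr
    intro p _
    simp [and_assoc]
  calc (1 + if e = l then 1 else 0) * eTilde G τ g u
      + ∑ x : Fin k → ZMod 2, Ncw G τ e l x * (k - hWeight x).choose u
      = (1 + if e = l then 1 else 0) * (eTilde G τ g u + ∑ A ∈ S, corr A) := by
        rw [← hcorrpair, hcorrsum]; ring
    _ = (1 + if e = l then 1 else 0) * (S.card * (k.choose u * k)) := by rw [hsum]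
    _ = (PairSet τ e l).card * (k.choose u * k) := by rw [hcards]; ring

lemma PairSet_card_ne {e l : Fin n} (hel : e ≠ l) :
    (PairSet τ e l).card = colCount τ e * colCount τ l := by
  have : PairSet τ e l
      = (Finset.univ.filter fun j => τ j = e) ×ˢ (Finset.univ.filter fun j => τ j = l) := by
    ext p
    simp only [PairSet, Finset.mem_filter, Finset.mem_univ, true_and, Finset.mem_product]
    constructor
    · rintro ⟨_, h1, h2⟩; exact ⟨h1, h2⟩
    · rintro ⟨h1, h2⟩
      exact ⟨fun hpp => hel (by rw [← h1, hpp, h2]), h1, h2⟩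
  rw [this, Finset.card_product]
  rfl

lemma PairSet_card_eq (l : Fin n) :
    (PairSet τ l l).card = colCount τ l * colCount τ l - colCount τ l := by
  have : PairSet τ l l = (Finset.univ.filter fun j => τ j = l).offDiag := by
    ext p
    simp only [PairSet, Finset.mem_filter, Finset.mem_univ, true_and, Finset.mem_offDiag]
    tauto
  rw [this, Finset.offDiag_card]
  rfl

lemma Ncw_symm (e l : Fin n) (x : Fin k → ZMod 2) : Ncw G τ e l x = Ncw G τ l e x := by
  refine Finset.card_bij' (fun p _ => (p.2, p.1)) (fun p _ => (p.2, p.1)) ?_ ?_ ?_ ?_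
  · intro p hp
    rw [Finset.mem_filter] at hp ⊢
    obtain ⟨_, h1, h2, h3, h4⟩ := hp
    exact ⟨Finset.mem_univ _, h1.symm, h3, h2, h4.trans (wt2vec_comm p.1 p.2)⟩
  · intro p hp
    rw [Finset.mem_filter] at hp ⊢
    obtain ⟨_, h1, h2, h3, h4⟩ := hp
    exact ⟨Finset.mem_univ _, h1.symm, h3, h2, h4.trans (wt2vec_comm p.1 p.2)⟩
  · intro p _; rfl
  · intro p _; rfl

lemma Ncw_zero_of_no_e {e l : Fin n} (he : colCount τ e = 0) (x : Fin k → ZMod 2) :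
    Ncw G τ e l x = 0 := by
  rw [Ncw, Finset.card_eq_zero]
  rw [Finset.filter_eq_empty_iff]
  rintro p _ ⟨h1, h2, h3, h4⟩
  have : p.1 ∈ Finset.univ.filter fun j => τ j = e := by simp [h2]
  rw [Finset.card_eq_zero.1 he] at this
  simp at this

lemma Ncw_zero_of_one_l {l : Fin n} (hl : colCount τ l ≤ 1) (x : Fin k → ZMod 2) :
    Ncw G τ l l x = 0 := by
  rw [Ncw, Finset.card_eq_zero, Finset.filter_eq_empty_iff]
  rintro p _ ⟨h1, h2, h3, h4⟩
  have hsub : ({p.1, p.2} : Finset (Fin q)) ⊆ Finset.univ.filter fun j => τ j = l := by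
    intro r hr
    simp only [Finset.mem_insert, Finset.mem_singleton] at hr
    rcases hr with h | h <;> subst h <;> simp [h2, h3]
  have := Finset.card_le_card hsub
  rw [Finset.card_insert_of_notMem (by simpa using h1), Finset.card_singleton] at this
  unfold colCount at hl
  omega

end ET
lemma zsum (ε : ℝ) {w k' : ℕ} (hw : w ≤ k') :
    ∑ z ∈ Finset.range (k' + 1), ε ^ z * (1 - ε) ^ (k' - z) * ((k' - w).choose (k' - z) : ℝ)
      = ε ^ w := by
  rw [← Finset.sum_range_reflect]
  have h1 : ∀ j ∈ Finset.range (k' + 1),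
      ε ^ (k' + 1 - 1 - j) * (1 - ε) ^ (k' - (k' + 1 - 1 - j))
          * ((k' - w).choose (k' - (k' + 1 - 1 - j)) : ℝ)
        = ε ^ (k' - j) * (1 - ε) ^ j * ((k' - w).choose j : ℝ) := by
    intro j hj
    rw [Finset.mem_range] at hj
    have h2 : k' + 1 - 1 - j = k' - j := by omega
    have h3 : k' - (k' - j) = j := by omega
    rw [h2, h3]
  rw [Finset.sum_congr rfl h1]
  have h4 : ∀ j ∈ Finset.range (k' - w + 1),
      ε ^ (k' - j) * (1 - ε) ^ j * ((k' - w).choose j : ℝ)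
        = ε ^ w * ((1 - ε) ^ j * ε ^ (k' - w - j) * ((k' - w).choose j : ℝ)) := by
    intro j hj
    rw [Finset.mem_range] at hj
    have : k' - j = w + (k' - w - j) := by omega
    rw [this, pow_add]
    ring
  have hsub : Finset.range (k' - w + 1) ⊆ Finset.range (k' + 1) :=
    Finset.range_subset_range.2 (by omega)
  rw [← Finset.sum_subset hsub (fun j hj hj2 => by
    rw [Finset.mem_range] at hj hj2
    have : k' - w < j := by omega
    rw [Nat.choose_eq_zero_of_lt this]
    simp)]
  rw [Finset.sum_congr rfl h4, ← Finset.mul_sum, ← add_pow (1 - ε) ε (k' - w)]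
  norm_num

lemma chi_sum {n k q : ℕ} {G : Matrix (Fin k) (Fin q) (ZMod 2)} {τ : Fin q → Fin n}
    (hrk : G.rank = k) (l e : Fin n) (ε : ℝ) :
    ∑ u ∈ Finset.Icc 1 k, (chi2 G τ u l e : ℝ) * ε ^ u
      = ∑ x : Fin k → ZMod 2, (Ncw G τ l e x : ℝ) * ε ^ hWeight x := by
  have lhs : ∀ u, (chi2 G τ u l e : ℝ) * ε ^ u
      = ∑ p : Fin q × Fin q, (if p.1 ≠ p.2 ∧ τ p.1 = l ∧ τ p.2 = e ∧
          ∃ x : Fin k → ZMod 2, hWeight x = u ∧ Matrix.vecMul x G = wt2vec p.1 p.2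
          then ε ^ u else 0) := by
    intro u
    rw [chi2, ← Finset.sum_filter, Finset.sum_const, nsmul_eq_mul]
  have rhs : ∀ x : Fin k → ZMod 2, (Ncw G τ l e x : ℝ) * ε ^ hWeight x
      = ∑ p : Fin q × Fin q, (if p.1 ≠ p.2 ∧ τ p.1 = l ∧ τ p.2 = e ∧
          Matrix.vecMul x G = wt2vec p.1 p.2 then ε ^ hWeight x else 0) := by
    intro x
    rw [Ncw, ← Finset.sum_filter, Finset.sum_const, nsmul_eq_mul]
  rw [Finset.sum_congr rfl fun u _ => lhs u, Finset.sum_congr rfl fun x _ => rhs x,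
    Finset.sum_comm (s := Finset.Icc 1 k) (t := (Finset.univ : Finset (Fin q × Fin q))),
    Finset.sum_comm (s := (Finset.univ : Finset (Fin k → ZMod 2)))
      (t := (Finset.univ : Finset (Fin q × Fin q)))]
  apply Finset.sum_congr rfl
  intro p _
  by_cases hstat : p.1 ≠ p.2 ∧ τ p.1 = l ∧ τ p.2 = e
  · obtain ⟨hne, h1, h2⟩ := hstat
    by_cases hex : ∃ x0 : Fin k → ZMod 2, Matrix.vecMul x0 G = wt2vec p.1 p.2
    · obtain ⟨x0, hx0⟩ := hex
      have hx0ne : x0 ≠ 0 := by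
        intro h; rw [h] at hx0
        exact wt2vec_ne_zero p.1 p.2 (by simpa using hx0.symm)
      have hL : ∀ u, (p.1 ≠ p.2 ∧ τ p.1 = l ∧ τ p.2 = e ∧
          ∃ x : Fin k → ZMod 2, hWeight x = u ∧ Matrix.vecMul x G = wt2vec p.1 p.2)
          ↔ u = hWeight x0 := by
        intro u
        constructor
        · rintro ⟨_, _, _, x, hxu, hxg⟩
          rw [← hxu, vecMul_unique hrk (hxg.trans hx0.symm)]
        · rintro rfl
          exact ⟨hne, h1, h2, x0, rfl, hx0⟩
      have hR : ∀ x : Fin k → ZMod 2, (p.1 ≠ p.2 ∧ τ p.1 = l ∧ τ p.2 = e ∧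
          Matrix.vecMul x G = wt2vec p.1 p.2) ↔ x = x0 := by
        intro x
        constructor
        · rintro ⟨_, _, _, hxg⟩
          exact vecMul_unique hrk (hxg.trans hx0.symm)
        · rintro rfl
          exact ⟨hne, h1, h2, hx0⟩
      rw [Finset.sum_congr rfl fun u _ => if_congr (hL u) rfl rfl,
        Finset.sum_congr rfl fun x _ => if_congr (hR x) rfl rfl]
      rw [Finset.sum_ite_eq' (Finset.Icc 1 k) (hWeight x0) (fun u => ε ^ u),
        Finset.sum_ite_eq' Finset.univ x0 (fun x => ε ^ hWeight x)]
      have : hWeight x0 ∈ Finset.Icc 1 k := by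
        rw [Finset.mem_Icc]
        exact ⟨hWeight_pos hx0ne, hWeight_le x0⟩
      rw [if_pos this, if_pos (Finset.mem_univ x0)]
    · have hL : ∀ u, ¬(p.1 ≠ p.2 ∧ τ p.1 = l ∧ τ p.2 = e ∧
          ∃ x : Fin k → ZMod 2, hWeight x = u ∧ Matrix.vecMul x G = wt2vec p.1 p.2) := by
        rintro u ⟨_, _, _, x, _, hxg⟩
        exact hex ⟨x, hxg⟩
      have hR : ∀ x : Fin k → ZMod 2, ¬(p.1 ≠ p.2 ∧ τ p.1 = l ∧ τ p.2 = e ∧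
          Matrix.vecMul x G = wt2vec p.1 p.2) := by
        rintro x ⟨_, _, _, hxg⟩
        exact hex ⟨x, hxg⟩
      rw [Finset.sum_congr rfl fun u _ => if_neg (hL u),
        Finset.sum_congr rfl fun x _ => if_neg (hR x)]
      simp
  · have hL : ∀ u, ¬(p.1 ≠ p.2 ∧ τ p.1 = l ∧ τ p.2 = e ∧
        ∃ x : Fin k → ZMod 2, hWeight x = u ∧ Matrix.vecMul x G = wt2vec p.1 p.2) := by
      rintro u ⟨ha, hb, hc, _⟩
      exact hstat ⟨ha, hb, hc⟩
    have hR : ∀ x : Fin k → ZMod 2, ¬(p.1 ≠ p.2 ∧ τ p.1 = l ∧ τ p.2 = e ∧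
        Matrix.vecMul x G = wt2vec p.1 p.2) := by
      rintro x ⟨ha, hb, hc, _⟩
      exact hstat ⟨ha, hb, hc⟩
    rw [Finset.sum_congr rfl fun u _ => if_neg (hL u),
      Finset.sum_congr rfl fun x _ => if_neg (hR x)]
    simp

lemma hasDeriv_poly (a b : ℕ) :
    HasDerivAt (fun x : ℝ => (1 - x) ^ a * x ^ b)
      ((if a = 0 then (b : ℝ) else 0) - (if a = 1 then 1 else 0)) 1 := by
  have h1 : HasDerivAt (fun x : ℝ => 1 - x) (-1) 1 := by
    simpa using (hasDerivAt_id (1:ℝ)).const_sub 1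
  have h2 := h1.fun_pow a
  have h3 := hasDerivAt_pow b (1:ℝ)
  have h4 := h2.fun_mul h3
  refine h4.congr_deriv (Eq.symm ?_)
  simp only [sub_self]
  match a with
  | 0 => norm_num
  | 1 => norm_num
  | (a+2) =>
    have ha2 : a + 2 ≠ 0 := by omega
    have ha1 : a + 2 ≠ 1 := by omega
    rw [if_neg ha2, if_neg ha1]
    norm_num

section MAIN
variable {n k q : ℕ} {G : Matrix (Fin k) (Fin q) (ZMod 2)} {τ : Fin q → Fin n}

lemma aVN_t0 (hrk : G.rank = k) (hmd : HasMinDistGE2 G) {l : Fin n}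
    (hl : 1 ≤ colCount τ l) (z : ℕ) : aVN G τ l (fun _ => 0) z = 0 := by
  rw [aVN, E1 hrk hmd (g := fun m => colCount τ m - (fun _ => 0) m) (fun m => by simp),
    E2 hrk hmd hl (g := fun m => colCount τ m - (fun _ => 0) m - (if m = l then 1 else 0))
      (fun m => by simp)]
  push_cast [Nat.sub_zero]
  ring

lemma aVN_t1 (hrk : G.rank = k) (hmd : HasMinDistGE2 G) {l e : Fin n}
    (hl : 1 ≤ colCount τ l)
    (hbig : if e = l then 2 ≤ colCount τ l else 1 ≤ colCount τ e) (z : ℕ) :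
    aVN G τ l (fun m => if m = e then 1 else 0) z
      = ∑ x : Fin k → ZMod 2,
          (Ncw G τ l e x : ℝ) * ((k - hWeight x).choose (k - z) : ℝ) := by
  by_cases hel : e = l
  · subst hel
    rw [if_pos rfl] at hbig
    have hE2 : eTilde G τ (fun m => colCount τ m - (fun m => if m = e then 1 else 0) m) (k - z)
        = colCount τ e * (k.choose (k - z) * k) :=
      E2 hrk hmd hl (fun m => by simp) (k - z)
    have hd : ∀ m, (if m = e then 1 else 0) + (if m = e then 1 else 0) ≤ colCount τ m := by
      intro m
      by_cases h : m = e
      · subst h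
        rw [if_pos (rfl : m = m)]
        omega
      · simp only [if_neg h]
        omega
    have hE34 := E34 hrk hmd (e := e) (l := e)
      (g := fun m => colCount τ m - (fun m => if m = e then 1 else 0) m
        - (if m = e then 1 else 0)) hd (fun m => by simp) (k - z)
    rw [if_pos rfl, PairSet_card_eq] at hE34
    rw [aVN, hE2]
    have hcast := congrArg (fun x : ℕ => (x : ℝ)) hE34
    push_cast [Nat.cast_sub (show colCount τ e ≤ colCount τ e * colCount τ e by nlinarith)]
      at hcast
    simp only [if_pos rfl]
    push_cast [Nat.cast_sub hl]
    ring_nf at hcast ⊢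
    linarith [hcast]
  · rw [if_neg hel] at hbig
    have hE2 : eTilde G τ (fun m => colCount τ m - (fun m => if m = e then 1 else 0) m) (k - z)
        = colCount τ e * (k.choose (k - z) * k) :=
      E2 hrk hmd hbig (fun m => by simp) (k - z)
    have hd : ∀ m, (if m = e then 1 else 0) + (if m = l then 1 else 0) ≤ colCount τ m := by
      intro m
      by_cases h1 : m = e
      · have h2 : m ≠ l := fun h2 => hel (h1.symm.trans h2)
        rw [if_pos h1, if_neg h2, h1]
        omega
      · by_cases h2 : m = l
        · rw [if_neg h1, if_pos h2, h2]
          omega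
        · rw [if_neg h1, if_neg h2]
          omega
    have hE34 := E34 hrk hmd (e := e) (l := l)
      (g := fun m => colCount τ m - (fun m => if m = e then 1 else 0) m
        - (if m = l then 1 else 0)) hd (fun m => by simp) (k - z)
    rw [if_neg hel, PairSet_card_ne hel] at hE34
    rw [aVN, hE2]
    have hNs : ∀ x : Fin k → ZMod 2, Ncw G τ e l x = Ncw G τ l e x := fun x => Ncw_symm e l x
    rw [Finset.sum_congr rfl (fun x _ => by rw [hNs x])] at hE34
    have hcast := congrArg (fun x : ℕ => (x : ℝ)) hE34
    push_cast at hcast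
    simp only [if_neg (fun h : l = e => hel h.symm)]
    push_cast [Nat.sub_zero]
    ring_nf at hcast ⊢
    linarith [hcast]

lemma mem_tRange_iff {Q : Fin n → ℕ} {l : Fin n} {t : Fin n → ℕ} :
    t ∈ tRange Q l ↔ ∀ m, t m < (if m = l then Q m else Q m + 1) := by
  rw [tRange, Fintype.mem_piFinset]
  simp only [Finset.mem_range]

lemma inner_sum (hrk : G.rank = k) (hmd : HasMinDistGE2 G) (l e : Fin n)
    (hl : 1 ≤ colCount τ l) (z : ℕ) :
    ∑ t ∈ tRange (colCount τ) l,
      (((if t e = 0 then ((colCount τ e - t e - (if e = l then 1 else 0) : ℕ) : ℝ) else 0)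
        - (if t e = 1 then 1 else 0))
        * (∏ m ∈ Finset.univ.erase e, (0:ℝ) ^ (t m)) * aVN G τ l t z)
      = -(∑ x : Fin k → ZMod 2,
          (Ncw G τ l e x : ℝ) * ((k - hWeight x).choose (k - z) : ℝ)) := by
  set F : (Fin n → ℕ) → ℝ := fun t =>
    (((if t e = 0 then ((colCount τ e - t e - (if e = l then 1 else 0) : ℕ) : ℝ) else 0)
        - (if t e = 1 then 1 else 0))
        * (∏ m ∈ Finset.univ.erase e, (0:ℝ) ^ (t m)) * aVN G τ l t z) with hF
  set t0 : Fin n → ℕ := fun _ => 0 with ht0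
  set t1 : Fin n → ℕ := fun m => if m = e then 1 else 0 with ht1
  have hFt0 : F t0 = 0 := by
    rw [hF]
    simp only [ht0]
    rw [aVN_t0 hrk hmd hl z, mul_zero]
  have hmemt0 : t0 ∈ tRange (colCount τ) l := by
    rw [mem_tRange_iff]
    intro m
    have hval : t0 m = 0 := rfl
    rw [hval]
    by_cases hml : m = l
    · rw [if_pos hml, hml]
      omega
    · rw [if_neg hml]
      omega
  have hvanish : ∀ t ∈ tRange (colCount τ) l, F t ≠ 0 → t = t0 ∨ t = t1 := by
    intro t _ hFt
    by_cases hsupp : ∀ m, m ≠ e → t m = 0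
    · by_cases h0 : t e = 0
      · left
        funext m
        by_cases hm : m = e
        · rw [hm, h0]
        · rw [hsupp m hm]
      · by_cases h1 : t e = 1
        · right
          funext m
          by_cases hm : m = e
          · rw [hm, h1, ht1]; simp
          · rw [hsupp m hm, ht1]; simp [hm]
        · exfalso
          apply hFt
          rw [hF]
          simp only [if_neg h0, if_neg h1, sub_zero, zero_mul, sub_self]
    · push_neg at hsupp
      obtain ⟨m, hm, hne0⟩ := hsupp
      exfalso
      apply hFt
      rw [hF]
      have : (∏ m ∈ Finset.univ.erase e, (0:ℝ) ^ (t m)) = 0 :=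
        Finset.prod_eq_zero (Finset.mem_erase.2 ⟨hm, Finset.mem_univ m⟩)
          (zero_pow hne0)
      simp only [this, mul_zero, zero_mul]
  rw [← Finset.sum_filter_of_ne hvanish]
  have hCt1 : (∏ m ∈ Finset.univ.erase e, (0:ℝ) ^ (t1 m)) = 1 := by
    apply Finset.prod_eq_one
    intro m hm
    rw [Finset.mem_erase] at hm
    simp [ht1, hm.1]
  by_cases hbig : if e = l then 2 ≤ colCount τ l else 1 ≤ colCount τ e
  · have hmemt1 : t1 ∈ tRange (colCount τ) l := by
      rw [mem_tRange_iff]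
      intro m
      have hval : t1 m = if m = e then 1 else 0 := rfl
      rw [hval]
      by_cases hm : m = e
      · rw [if_pos hm]
        by_cases hml : m = l
        · rw [if_pos hml]
          have : e = l := hm.symm.trans hml
          rw [if_pos this] at hbig
          rw [hml] at hm ⊢
          omega
        · rw [if_neg hml]
          have : e ≠ l := fun h => hml (hm.trans h)
          rw [if_neg this] at hbig
          rw [hm]
          omega
      · rw [if_neg hm]
        by_cases hml : m = l
        · rw [if_pos hml, hml]
          omega
        · rw [if_neg hml]
          omega
    have hne : t0 ≠ t1 := by
      intro h
      have := congrFun h e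
      simp [ht0, ht1] at this
    have hfil : (tRange (colCount τ) l).filter (fun t => t = t0 ∨ t = t1) = {t0, t1} := by
      ext t
      simp only [Finset.mem_filter, Finset.mem_insert, Finset.mem_singleton]
      constructor
      · rintro ⟨_, h⟩; exact h
      · rintro (h | h) <;> subst h
        · exact ⟨hmemt0, Or.inl rfl⟩
        · exact ⟨hmemt1, Or.inr rfl⟩
    rw [hfil, Finset.sum_pair hne, hFt0, zero_add]
    have ht1e : t1 e = 1 := by rw [ht1]; simp
    have hFt1 : F t1 = -(aVN G τ l t1 z) := by
      rw [hF]
      simp only [ht1e, hCt1]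
      norm_num
    rw [hFt1, ht1, aVN_t1 hrk hmd hl hbig z]
  · have hmemt1 : t1 ∉ tRange (colCount τ) l := by
      rw [mem_tRange_iff]
      push_neg
      refine ⟨e, ?_⟩
      have hval : t1 e = 1 := by rw [ht1]; simp
      rw [hval]
      by_cases hml : e = l
      · rw [if_pos hml] at hbig ⊢
        rw [hml]
        omega
      · rw [if_neg hml] at hbig ⊢
        omega
    have hfil : (tRange (colCount τ) l).filter (fun t => t = t0 ∨ t = t1) = {t0} := by
      ext t
      simp only [Finset.mem_filter, Finset.mem_singleton]
      constructor
      · rintro ⟨hmem, h | h⟩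
        · exact h
        · subst h; exact absurd hmem hmemt1
      · rintro h; subst h; exact ⟨hmemt0, Or.inl rfl⟩
    rw [hfil, Finset.sum_singleton, hFt0]
    have hNzero : ∀ x : Fin k → ZMod 2, Ncw G τ l e x = 0 := by
      intro x
      by_cases hel : e = l
      · subst hel
        rw [if_pos rfl] at hbig
        exact Ncw_zero_of_one_l (by omega) x
      · rw [if_neg hel] at hbig
        rw [← Ncw_symm]
        exact Ncw_zero_of_no_e (by omega) x
    rw [Finset.sum_congr rfl (fun x _ => by rw [hNzero x, Nat.cast_zero, zero_mul])]
    simp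

end MAIN

end Aux

/-- **Per-type VN derivative formula.** For a VN type with full-rank generator matrix
whose local code has minimum distance at least `2`, the partial derivative of
`I_{EV,l}^{(γ)}(·,ε)` with respect to its `e`-th argument, evaluated at the all-ones
point, equals `(1/q_{γ,l}) Σ_{u=1}^{k_γ} χ_{2,u}^{(γ)}(l,e) ε^u`; in particular it is `0`
whenever the local code has minimum distance greater than `2`. -/
theorem deriv_IEV_eq_chi {n k q : ℕ} (hn : 1 ≤ n)
    (G : Matrix (Fin k) (Fin q) (ZMod 2)) (τ : Fin q → Fin n)
    (hrk : G.rank = k) (hmd : HasMinDistGE2 G)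
    (ε : ℝ) (hε : ε ∈ Set.Ioo (0 : ℝ) 1) (l e : Fin n) (hl : 0 < colCount τ l) :
    deriv (fun x : ℝ => IEV G τ l (Function.update (fun _ => (1 : ℝ)) e x) ε) 1
      = (1 / (colCount τ l : ℝ)) *
          ∑ u ∈ Finset.Icc 1 k, (chi2 G τ u l e : ℝ) * ε ^ u ∧
    ((∀ x : Fin k → ZMod 2, Matrix.vecMul x G ≠ 0 → 3 ≤ hWeight (Matrix.vecMul x G)) →
      deriv (fun x : ℝ => IEV G τ l (Function.update (fun _ => (1 : ℝ)) e x) ε) 1 = 0) := by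
  have hprod : ∀ (x : ℝ) (t : Fin n → ℕ),
      (∏ m, (1 - Function.update (fun _ => (1:ℝ)) e x m) ^ t m *
        (Function.update (fun _ => (1:ℝ)) e x m) ^
          (colCount τ m - t m - if m = l then 1 else 0))
      = ((1 - x) ^ t e * x ^ (colCount τ e - t e - if e = l then 1 else 0)) *
          ∏ m ∈ Finset.univ.erase e, (0:ℝ) ^ t m := by
    intro x t
    rw [← Finset.mul_prod_erase Finset.univ _ (Finset.mem_univ e)]
    congr 1
    · rw [Function.update_self]
    · apply Finset.prod_congr rfl
      intro m hm
      rw [Finset.mem_erase] at hm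
      rw [Function.update_of_ne hm.1]
      simp
  have hfun : (fun x : ℝ => IEV G τ l (Function.update (fun _ => (1:ℝ)) e x) ε)
      = fun x : ℝ => 1 - (1 / (colCount τ l : ℝ)) *
          ∑ z ∈ Finset.range (k+1), ε ^ z * (1 - ε) ^ (k - z) *
            ∑ t ∈ tRange (colCount τ) l,
              (((1 - x) ^ t e * x ^ (colCount τ e - t e - if e = l then 1 else 0)) *
                (∏ m ∈ Finset.univ.erase e, (0:ℝ) ^ t m)) * aVN G τ l t z := by
    funext x
    rw [IEV]
    have hz : ∀ z ∈ Finset.range (k+1),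
        ε ^ z * (1 - ε) ^ (k - z) *
          ∑ t ∈ tRange (colCount τ) l,
            (∏ m, (1 - Function.update (fun _ => (1:ℝ)) e x m) ^ t m *
              (Function.update (fun _ => (1:ℝ)) e x m) ^
                (colCount τ m - t m - if m = l then 1 else 0)) * aVN G τ l t z
        = ε ^ z * (1 - ε) ^ (k - z) *
          ∑ t ∈ tRange (colCount τ) l,
            (((1 - x) ^ t e * x ^ (colCount τ e - t e - if e = l then 1 else 0)) *
              (∏ m ∈ Finset.univ.erase e, (0:ℝ) ^ t m)) * aVN G τ l t z := by
      intro z _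
      congr 1
      apply Finset.sum_congr rfl
      intro t _
      rw [hprod x t]
    rw [Finset.sum_congr rfl hz]
  set D : ℝ := ∑ z ∈ Finset.range (k+1), ε ^ z * (1 - ε) ^ (k - z) *
      ∑ t ∈ tRange (colCount τ) l,
        (((if t e = 0 then ((colCount τ e - t e - (if e = l then 1 else 0) : ℕ) : ℝ) else 0)
          - (if t e = 1 then 1 else 0))
          * (∏ m ∈ Finset.univ.erase e, (0:ℝ) ^ (t m)) * aVN G τ l t z) with hD
  have hder : HasDerivAt
      (fun x : ℝ => 1 - (1 / (colCount τ l : ℝ)) *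
          ∑ z ∈ Finset.range (k+1), ε ^ z * (1 - ε) ^ (k - z) *
            ∑ t ∈ tRange (colCount τ) l,
              (((1 - x) ^ t e * x ^ (colCount τ e - t e - if e = l then 1 else 0)) *
                (∏ m ∈ Finset.univ.erase e, (0:ℝ) ^ t m)) * aVN G τ l t z)
      (-((1 / (colCount τ l : ℝ)) * D)) 1 := by
    apply HasDerivAt.const_sub
    apply HasDerivAt.const_mul
    rw [hD]
    apply HasDerivAt.fun_sum
    intro z _
    apply HasDerivAt.const_mul
    apply HasDerivAt.fun_sum
    intro t _
    exact ((hasDeriv_poly (t e)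
      (colCount τ e - t e - if e = l then 1 else 0)).mul_const _).mul_const _
  have hderiv : deriv (fun x : ℝ => IEV G τ l (Function.update (fun _ => (1:ℝ)) e x) ε) 1
      = -((1 / (colCount τ l : ℝ)) * D) := by
    rw [hfun]
    exact hder.deriv
  have hDval : D = -(∑ u ∈ Finset.Icc 1 k, (chi2 G τ u l e : ℝ) * ε ^ u) := by
    rw [hD]
    rw [Finset.sum_congr rfl (fun z _ => by rw [inner_sum hrk hmd l e hl z])]
    rw [chi_sum hrk l e ε]
    have hz2 : ∀ z ∈ Finset.range (k+1),
        ε ^ z * (1 - ε) ^ (k - z) *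
          -(∑ x : Fin k → ZMod 2,
            (Ncw G τ l e x : ℝ) * ((k - hWeight x).choose (k - z) : ℝ))
        = -(∑ x : Fin k → ZMod 2, (Ncw G τ l e x : ℝ) *
            (ε ^ z * (1 - ε) ^ (k - z) * ((k - hWeight x).choose (k - z) : ℝ))) := by
      intro z _
      rw [mul_neg, Finset.mul_sum]
      congr 1
      apply Finset.sum_congr rfl
      intro x _
      ring
    rw [Finset.sum_congr rfl hz2, Finset.sum_neg_distrib]
    congr 1
    rw [Finset.sum_comm]
    apply Finset.sum_congr rfl
    intro x _
    rw [← Finset.mul_sum]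
    congr 1
    exact zsum ε (hWeight_le x)
  constructor
  · rw [hderiv, hDval]
    ring
  · intro h3
    have hchi : ∀ u ∈ Finset.Icc 1 k, (chi2 G τ u l e : ℝ) * ε ^ u = 0 := by
      intro u _
      have hzero : chi2 G τ u l e = 0 := by
        rw [chi2, Finset.card_eq_zero, Finset.filter_eq_empty_iff]
        rintro p _ ⟨hne, _, _, x, hxu, hxg⟩
        have h2 : hWeight (Matrix.vecMul x G) = 2 := by rw [hxg]; exact hWeight_wt2vec hne
        have hne0 : Matrix.vecMul x G ≠ 0 := by rw [hxg]; exact wt2vec_ne_zero p.1 p.2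
        have := h3 x hne0
        omega
      rw [hzero]
      simp
    rw [hderiv, hDval, Finset.sum_eq_zero hchi]
    simp


end MET
end
end

section
/- Vanishing of the zeroth coefficient: Let G be a k × q matrix over GF(2) of rank k whose row space has minimum Hamming weight at least 2, with each column assigned an edge type in E = {1,…,n_e} (q_l denotes the number of type-l columns). Then for every 0 ≤ u ≤ k and every l ∈ E with q_l > 0: (i) ẽ_{(q_1,…,q_{n_e}); u} = k·C(k,u); (ii) ẽ_{(q_1,…,q_l−1,…,q_{n_e}); u} = q_l·k·C(k,u); consequently q_l·ẽ_{(q_1,…,q_{n_e}); u} − ẽ_{(q_1,…,q_l−1,…,q_{n_e}); u} = 0. -/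
open scoped Classical

noncomputable section

namespace MET

section Aux

variable {n k q : ℕ}

lemma rank_eq_of_vecMul_inj {m : Type*} [Fintype m] (M : Matrix (Fin k) m (ZMod 2))
    (h : ∀ x : Fin k → ZMod 2, Matrix.vecMul x M = 0 → x = 0) : M.rank = k := by
  have hli : LinearIndependent (ZMod 2) (fun i => M i) := by
    rw [Fintype.linearIndependent_iff]
    intro c hc
    have : Matrix.vecMul c M = 0 := by
      ext j
      simpa [Matrix.vecMul, dotProduct] using congrFun hc j
    intro i; exact congrFun (h c this) i
  simpa using hli.rank_matrix

lemma rows_li_of_rank (G : Matrix (Fin k) (Fin q) (ZMod 2)) (hrk : G.rank = k) :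
    ∀ x : Fin k → ZMod 2, Matrix.vecMul x G = 0 → x = 0 := by
  have hli : LinearIndependent (ZMod 2) (fun i => G i) := by
    rw [linearIndependent_iff_card_eq_finrank_span]
    rw [Matrix.rank_eq_finrank_span_row] at hrk
    have := hrk.symm; simp [Set.finrank] at this ⊢; exact this
  rw [Fintype.linearIndependent_iff] at hli
  intro x hx
  funext i
  refine hli x ?_ i
  funext j
  simpa [Matrix.vecMul, dotProduct] using congrFun hx j

lemma colRank_eq_k (G : Matrix (Fin k) (Fin q) (ZMod 2)) (hrk : G.rank = k)
    (hmd : HasMinDistGE2 G) (A : Finset (Fin q)) (T : Finset (Fin k))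
    (hA : (Finset.univ \ A).card ≤ 1) : colRank G A T = k := by
  apply rank_eq_of_vecMul_inj
  intro x hx
  have hGA : ∀ a ∈ A, Matrix.vecMul x G a = 0 := by
    intro a ha
    have := congrFun hx (Sum.inl ⟨a, ha⟩)
    simpa [Matrix.vecMul, dotProduct] using this
  have hw : hWeight (Matrix.vecMul x G) ≤ 1 := by
    refine le_trans (Finset.card_le_card ?_) hA
    intro j hj
    simp only [hWeight, Finset.mem_filter, Finset.mem_univ, true_and] at hj
    simp only [Finset.mem_sdiff, Finset.mem_univ, true_and]
    intro hjA
    exact hj (hGA j hjA)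
  have hz : Matrix.vecMul x G = 0 := by
    by_contra hne
    exact absurd (hmd x hne) (by omega)
  exact rows_li_of_rank G hrk x hz

lemma Tfilter_card (u : ℕ) :
    (Finset.univ.filter fun T : Finset (Fin k) => T.card = u).card = Nat.choose k u := by
  have h : (Finset.univ.filter fun T : Finset (Fin k) => T.card = u)
      = Finset.powersetCard u (Finset.univ : Finset (Fin k)) := by
    ext T; simp [Finset.mem_powersetCard]
  rw [h, Finset.card_powersetCard]
  simp

end Aux

/-- **Vanishing of the zeroth coefficient.** For a full-rank generator matrix whose row
space has minimum Hamming weight at least `2`: (i) `ẽ_{(q_1,…,q_n);u} = k·C(k,u)`;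
(ii) `ẽ_{(q_1,…,q_l-1,…,q_n);u} = q_l·k·C(k,u)`; consequently
`q_l·ẽ_{(q_1,…,q_n);u} - ẽ_{(q_1,…,q_l-1,…,q_n);u} = 0`. -/


theorem eTilde_full_and_deleteOne {n k q : ℕ} (hn : 1 ≤ n)
    (G : Matrix (Fin k) (Fin q) (ZMod 2)) (τ : Fin q → Fin n)
    (hrk : G.rank = k) (hmd : HasMinDistGE2 G)
    (u : ℕ) (hu : u ≤ k) (l : Fin n) (hl : 0 < colCount τ l) :
    eTilde G τ (colCount τ) u = k * Nat.choose k u ∧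
    eTilde G τ (fun m => colCount τ m - (if m = l then 1 else 0)) u
      = colCount τ l * (k * Nat.choose k u) ∧
    ((colCount τ l : ℤ) * (eTilde G τ (colCount τ) u : ℤ)
      - (eTilde G τ (fun m => colCount τ m - (if m = l then 1 else 0)) u : ℤ) = 0) := by
  classical
  -- inner sum over T
  have hT : ∀ A : Finset (Fin q), (Finset.univ \ A).card ≤ 1 →
      (∑ T ∈ Finset.univ.filter (fun T : Finset (Fin k) => T.card = u), colRank G A T)
        = Nat.choose k u * k := by
    intro A hA
    rw [Finset.sum_congr rfl (fun T _ => colRank_eq_k G hrk hmd A T hA),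
      Finset.sum_const, Tfilter_card, smul_eq_mul]
  -- part (i): the filter set is {univ}
  have hF1 : (Finset.univ.filter (fun A : Finset (Fin q) =>
      ∀ m, (A.filter fun j => τ j = m).card = colCount τ m)) = {Finset.univ} := by
    ext A
    simp only [Finset.mem_filter, Finset.mem_univ, true_and, Finset.mem_singleton]
    constructor
    · intro hA
      apply Finset.eq_univ_iff_forall.mpr
      intro j
      have hsub : A.filter (fun i => τ i = τ j) ⊆ Finset.univ.filter (fun i => τ i = τ j) :=
        Finset.filter_subset_filter _ (Finset.subset_univ A)
      have heq : A.filter (fun i => τ i = τ j) = Finset.univ.filter (fun i => τ i = τ j) :=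
        Finset.eq_of_subset_of_card_le hsub (le_of_eq (hA (τ j)).symm)
      have : j ∈ A.filter (fun i => τ i = τ j) := by rw [heq]; simp
      exact (Finset.mem_filter.mp this).1
    · rintro rfl m; rfl
  have h1 : eTilde G τ (colCount τ) u = k * Nat.choose k u := by
    rw [eTilde, hF1, Finset.sum_singleton, hT _ (by simp), Nat.mul_comm]
  -- part (ii): the filter set is the image of erase
  have hF2 : (Finset.univ.filter (fun A : Finset (Fin q) =>
      ∀ m, (A.filter fun j => τ j = m).card
        = colCount τ m - (if m = l then 1 else 0)))
      = (Finset.univ.filter fun j => τ j = l).image (fun j => Finset.univ.erase j) := by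
    ext A
    simp only [Finset.mem_filter, Finset.mem_univ, true_and, Finset.mem_image]
    constructor
    · intro hA
      -- find the missing element
      have hcard : (Finset.univ.filter (fun i => τ i = l) \ A.filter (fun i => τ i = l)).card
          = 1 := by
        have hAl := hA l
        rw [if_pos rfl] at hAl
        rw [Finset.card_sdiff_of_subset (Finset.filter_subset_filter _ (Finset.subset_univ A)), hAl]
        have : (Finset.univ.filter fun i => τ i = l).card = colCount τ l := rfl
        omega
      obtain ⟨j, hj⟩ := Finset.card_eq_one.mp hcard
      have hjmem : j ∈ Finset.univ.filter (fun i => τ i = l) \ A.filter (fun i => τ i = l) := by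
        rw [hj]; simp
      simp only [Finset.mem_sdiff, Finset.mem_filter, Finset.mem_univ, true_and] at hjmem
      refine ⟨j, hjmem.1, ?_⟩
      have hjA : j ∉ A := fun h => hjmem.2 ⟨h, hjmem.1⟩
      ext i
      simp only [Finset.mem_erase, Finset.mem_univ, and_true]
      refine ⟨fun hne => ?_, fun hi h => hjA (by rwa [h] at hi)⟩
      · by_cases hil : τ i = l
        · by_contra hiA
          have : i ∈ Finset.univ.filter (fun i => τ i = l) \ A.filter (fun i => τ i = l) := by
            simp only [Finset.mem_sdiff, Finset.mem_filter, Finset.mem_univ, true_and]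
            exact ⟨hil, fun h => hiA h.1⟩
          rw [hj] at this
          exact hne (Finset.mem_singleton.mp this)
        · have heq : A.filter (fun i' => τ i' = τ i) = Finset.univ.filter (fun i' => τ i' = τ i) := by
            refine Finset.eq_of_subset_of_card_le
              (Finset.filter_subset_filter _ (Finset.subset_univ A)) ?_
            rw [hA (τ i), if_neg hil]
            have : (Finset.univ.filter fun i' => τ i' = τ i).card = colCount τ (τ i) := rfl
            omega
          have : i ∈ A.filter (fun i' => τ i' = τ i) := by rw [heq]; simp
          exact (Finset.mem_filter.mp this).1
    · rintro ⟨j, hjl, rfl⟩ m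
      rw [Finset.filter_erase]
      by_cases hm : m = l
      · subst hm
        rw [Finset.card_erase_of_mem (by simp [hjl])]
        simp [colCount]
      · rw [Finset.erase_eq_of_notMem
            (by simp only [Finset.mem_filter, Finset.mem_univ, true_and, hjl]
                exact fun h => hm h.symm)]
        simp [colCount, hm]
  have herase_inj : Set.InjOn (fun j : Fin q => Finset.univ.erase j)
      ↑(Finset.univ.filter fun j => τ j = l) := by
    intro a _ b _ hab
    by_contra hne
    have hb : b ∈ (Finset.univ : Finset (Fin q)).erase a := by
      simp [Ne.symm hne]
    rw [show (Finset.univ : Finset (Fin q)).erase a = Finset.univ.erase b from hab] at hb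
    exact (Finset.mem_erase.mp hb).1 rfl
  have h2 : eTilde G τ (fun m => colCount τ m - (if m = l then 1 else 0)) u
      = colCount τ l * (k * Nat.choose k u) := by
    rw [eTilde, hF2, Finset.sum_image herase_inj]
    have hsum : ∀ j ∈ Finset.univ.filter (fun j : Fin q => τ j = l),
        (∑ T ∈ Finset.univ.filter (fun T : Finset (Fin k) => T.card = u),
          colRank G (Finset.univ.erase j) T) = Nat.choose k u * k := by
      intro j _
      refine hT _ ?_
      rw [Finset.card_sdiff_of_subset (Finset.erase_subset _ _),
        Finset.card_erase_of_mem (Finset.mem_univ j)]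
      omega
    rw [Finset.sum_congr rfl hsum, Finset.sum_const, smul_eq_mul]
    have : (Finset.univ.filter fun j : Fin q => τ j = l).card = colCount τ l := rfl
    rw [this, Nat.mul_comm (Nat.choose k u) k]
  refine ⟨h1, h2, ?_⟩
  rw [h1, h2]
  push_cast
  ring
end MET
end
end
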